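/- arXiv:1301.5494 — 5 statements merged into one kernel-verified Lean document; each statement's English description precedes it below -/
import Mathlib

section
/- Assume the interaction kernel K satisfies (HK1)-(HK2). For each Borel probability measure μ^in on ℝ^d with finite first moment, there exists a unique map Z : ℝ × ℝ^d → ℝ^d, continuous in both variables with at most linear growth in the second variable locally uniformly in time (i.e. sup_{ζ}|Z(t,ζ)|/(1+|ζ|) is finite, locally uniformly in t), such that for every ζ^in ∈ ℝ^d the function t ↦ Z(t,ζ^in) is of class C¹ and satisfies ∂_t Z(t,ζ^in) = ∫_{ℝ^d} K(Z(t,ζ^in), z') μ(t)(dz') with μ(t) := Z(t,·)#μ^in and Z(0,ζ^in) = ζ^in. -/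
open MeasureTheory Real Filter Topology Set BoundedContinuousFunction
open scoped ENNReal NNReal

set_option linter.unusedSectionVars false
set_option maxHeartbeats 1000000

noncomputable section

/-! ### Auxiliary lemmas: weighted displacement maps and global Picard-Lindelöf -/

section ZmapSec

variable {E : Type*} [NormedAddCommGroup E] [NormedSpace ℝ E]

lemma onen (ζ : E) : (0:ℝ) < 1 + ‖ζ‖ := by positivity

/-- The map associating to a weighted-bounded displacement the corresponding flow map. -/
def Zmap (v : E →ᵇ E) (ζ : E) : E := ζ + (1 + ‖ζ‖) • v ζ

lemma Zmap_continuous (v : E →ᵇ E) : Continuous (Zmap v) :=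
  continuous_id.add ((continuous_const.add continuous_norm).smul v.continuous)

lemma Zmap_sub (v w : E →ᵇ E) (ζ : E) : Zmap v ζ - Zmap w ζ = (1 + ‖ζ‖) • (v ζ - w ζ) := by
  simp only [Zmap, smul_sub]; abel

lemma norm_Zmap_sub_le (v w : E →ᵇ E) (ζ : E) :
    ‖Zmap v ζ - Zmap w ζ‖ ≤ (1 + ‖ζ‖) * ‖v - w‖ := by
  rw [Zmap_sub, norm_smul, Real.norm_of_nonneg (onen ζ).le]
  have h1 : ‖v ζ - w ζ‖ = ‖(v - w) ζ‖ := by simp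
  rw [h1]
  exact mul_le_mul_of_nonneg_left (norm_coe_le_norm _ _) (onen ζ).le

lemma norm_Zmap_le (v : E →ᵇ E) (ζ : E) : ‖Zmap v ζ‖ ≤ (1 + ‖v‖) * (1 + ‖ζ‖) := by
  have h1 : ‖Zmap v ζ‖ ≤ ‖ζ‖ + (1 + ‖ζ‖) * ‖v ζ‖ := by
    refine (norm_add_le _ _).trans ?_
    rw [norm_smul, Real.norm_of_nonneg (onen ζ).le]
  have h2 : ‖v ζ‖ ≤ ‖v‖ := norm_coe_le_norm _ _
  nlinarith [norm_nonneg ζ, norm_nonneg (v ζ), norm_nonneg v]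

lemma norm_Zmap_pair (v : E →ᵇ E) (ζ z' : E) :
    ‖Zmap v ζ - Zmap v z'‖ ≤ (1 + ‖v‖) * ((1 + ‖ζ‖) + (1 + ‖z'‖)) := by
  have h1 : ‖Zmap v ζ - Zmap v z'‖ ≤ ‖Zmap v ζ‖ + ‖Zmap v z'‖ := norm_sub_le _ _
  have h2 := norm_Zmap_le v ζ
  have h3 := norm_Zmap_le v z'
  nlinarith [norm_nonneg v, norm_nonneg ζ, norm_nonneg z']

lemma Zmap_repr (u : E →ᵇ E) (W : E → E) (h : ∀ ζ, u ζ = (1 + ‖ζ‖)⁻¹ • (W ζ - ζ)) (ζ : E) :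
    Zmap u ζ = W ζ := by
  rw [Zmap, h, smul_smul, mul_inv_cancel₀ (onen ζ).ne', one_smul, add_sub_cancel]

lemma weight_est {n I A B : ℝ} (hn : 0 ≤ n) (hI : I ≤ A * ((1+n) + B)) (hA : 0 ≤ A)
    (hB : 0 ≤ B) : (1+n)⁻¹ * I ≤ A * (1 + B) := by
  have hp : (0:ℝ) < 1+n := by linarith
  rw [inv_mul_le_iff₀ hp]
  nlinarith [mul_nonneg (mul_nonneg hA hB) hn]

end ZmapSec

section ODEGlobal

variable {B : Type*} [NormedAddCommGroup B] [NormedSpace ℝ B] [CompleteSpace B]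

lemma ode_unique (Φ : B → B) (c : ℝ≥0) (hΦ : LipschitzWith c Φ) {f g : ℝ → B}
    (hf : ∀ t, HasDerivAt f (Φ (f t)) t) (hg : ∀ t, HasDerivAt g (Φ (g t)) t)
    (h0 : f 0 = g 0) : f = g := by
  funext t
  have ht1 : -(|t|+1) ≤ t := by have := neg_abs_le t; linarith
  have ht2 : t ≤ |t|+1 := by have := le_abs_self t; linarith
  refine ODE_solution_unique_of_mem_Icc (v := fun _ => Φ) (s := fun _ => univ)
    (fun _ _ => hΦ.lipschitzOnWith) (t₀ := 0) (a := -(|t|+2)) (b := |t|+2) ?_ ?_ ?_ ?_ ?_ ?_ ?_ h0 ?_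
  · exact ⟨by linarith [abs_nonneg t], by linarith [abs_nonneg t]⟩
  · exact fun s _ => (hf s).continuousAt.continuousWithinAt
  · exact fun s _ => hf s
  · exact fun _ _ => trivial
  · exact fun s _ => (hg s).continuousAt.continuousWithinAt
  · exact fun s _ => hg s
  · exact fun _ _ => trivial
  · exact ⟨by linarith [abs_nonneg t], by linarith [abs_nonneg t]⟩

lemma ode_step (Φ : B → B) (c : ℝ≥0) (hΦ : LipschitzWith c Φ) {a : ℝ} (ha : 0 < a)
    (hac : (c : ℝ) * a ≤ 1/2) (t₀ : ℝ) (y₀ : B) :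
    ∃ f : ℝ → B, f t₀ = y₀ ∧ ∀ t ∈ Icc (t₀ - a) (t₀ + a),
      HasDerivWithinAt f (Φ (f t)) (Icc (t₀ - a) (t₀ + a)) t := by
  have hy : (0:ℝ) ≤ ‖Φ y₀‖ := norm_nonneg _
  have hc : (0:ℝ) ≤ c := c.coe_nonneg
  set R : ℝ≥0 := ⟨2 * a * ‖Φ y₀‖, by positivity⟩ with hR
  set Lb : ℝ≥0 := ⟨‖Φ y₀‖ + c * (2 * a * ‖Φ y₀‖), by positivity⟩ with hLb
  have hpl : IsPicardLindelof (fun _ : ℝ => Φ) (tmin := t₀ - a) (tmax := t₀ + a)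
      ⟨t₀, ⟨by linarith, by linarith⟩⟩ y₀ R 0 Lb c := by
    apply IsPicardLindelof.of_time_independent
    · intro x hx
      show ‖Φ x‖ ≤ ‖Φ y₀‖ + c * (2 * a * ‖Φ y₀‖)
      have h1 : dist (Φ x) (Φ y₀) ≤ c * dist x y₀ := hΦ.dist_le_mul x y₀
      have h2 : dist x y₀ ≤ 2 * a * ‖Φ y₀‖ := Metric.mem_closedBall.mp hx
      have h3 : ‖Φ x‖ ≤ ‖Φ y₀‖ + dist (Φ x) (Φ y₀) := by
        rw [dist_eq_norm]
        calc ‖Φ x‖ = ‖Φ y₀ + (Φ x - Φ y₀)‖ := by congr 1; abel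
          _ ≤ ‖Φ y₀‖ + ‖Φ x - Φ y₀‖ := norm_add_le _ _
      have h4 : (c:ℝ) * dist x y₀ ≤ c * (2 * a * ‖Φ y₀‖) := by
        exact mul_le_mul_of_nonneg_left h2 hc
      linarith
    · exact hΦ.lipschitzOnWith
    · show (‖Φ y₀‖ + c * (2 * a * ‖Φ y₀‖)) * max (t₀ + a - t₀) (t₀ - (t₀ - a))
          ≤ 2 * a * ‖Φ y₀‖ - ((0:ℝ≥0):ℝ)
      have hmax : max (t₀ + a - t₀) (t₀ - (t₀ - a)) = a := by
        rw [max_eq_left (by linarith)]; ring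
      rw [hmax, NNReal.coe_zero, sub_zero]
      have : (c:ℝ) * a * (2 * a * ‖Φ y₀‖) ≤ (1/2) * (2 * a * ‖Φ y₀‖) := by
        apply mul_le_mul_of_nonneg_right hac; positivity
      nlinarith
  obtain ⟨f, hf0, hf⟩ := hpl.exists_eq_forall_mem_Icc_hasDerivWithinAt₀
  exact ⟨f, hf0, hf⟩

lemma ode_global (Φ : B → B) (c : ℝ≥0) (hΦ : LipschitzWith c Φ) (x₀ : B) :
    ∃ f : ℝ → B, f 0 = x₀ ∧ ∀ t, HasDerivAt f (Φ (f t)) t := by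
  classical
  set a : ℝ := (2 * ((c:ℝ) + 1))⁻¹ with ha_def
  have hc : (0:ℝ) ≤ c := c.coe_nonneg
  have ha : 0 < a := by positivity
  have hac : (c:ℝ) * a ≤ 1/2 := by
    rw [ha_def]
    rw [div_eq_mul_inv, mul_comm (1:ℝ)]
    rw [show (2 * ((c:ℝ) + 1))⁻¹ = (1:ℝ) / (2 * ((c:ℝ)+1)) by rw [one_div]]
    rw [show (2:ℝ)⁻¹ * 1 = 1/2 by norm_num]
    rw [mul_one_div, div_le_div_iff₀ (by positivity) (by norm_num)]
    nlinarith
  -- solutions on Icc (-(n+1)*a) ((n+1)*a)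
  have key : ∀ n : ℕ, ∃ f : ℝ → B, f 0 = x₀ ∧ ∀ t ∈ Icc (-((n+1 : ℝ) * a)) ((n+1 : ℝ) * a),
      HasDerivWithinAt f (Φ (f t)) (Icc (-((n+1 : ℝ) * a)) ((n+1 : ℝ) * a)) t := by
    intro n
    induction n with
    | zero =>
      obtain ⟨f, hf0, hf⟩ := ode_step Φ c hΦ ha hac 0 x₀
      refine ⟨f, hf0, ?_⟩
      have h1 : -(((0:ℕ)+1 : ℝ) * a) = 0 - a := by push_cast; ring
      have h2 : (((0:ℕ)+1 : ℝ) * a) = 0 + a := by push_cast; ring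
      rw [h1, h2]; exact hf
    | succ n ih =>
      obtain ⟨f, hf0, hf⟩ := ih
      set b : ℝ := (n+1 : ℝ) * a with hb_def
      have hb : 0 < b := by positivity
      obtain ⟨gp, hgp0, hgp⟩ := ode_step Φ c hΦ ha hac b (f b)
      obtain ⟨gm, hgm0, hgm⟩ := ode_step Φ c hΦ ha hac (-b) (f (-b))
      set h : ℝ → B := fun t => if t < -b then gm t else if t ≤ b then f t else gp t with hh_def
      have hEqA : ∀ s ∈ Icc (-b - a) (-b), h s = gm s := by
        intro s hs
        rcases lt_or_eq_of_le hs.2 with hlt | heq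
        · simp only [hh_def, if_pos hlt]
        · subst heq
          simp only [hh_def, lt_irrefl, if_neg (lt_irrefl _), if_pos (by linarith : -b ≤ b), hgm0]
      have hEqB : ∀ s ∈ Icc (-b) b, h s = f s := by
        intro s hs
        simp only [hh_def, if_neg (not_lt.mpr hs.1), if_pos hs.2]
      have hEqC : ∀ s ∈ Icc b (b + a), h s = gp s := by
        intro s hs
        have hs1 : ¬ s < -b := by push_neg; linarith [hs.1]
        rcases lt_or_eq_of_le hs.1 with hlt | heq
        · simp only [hh_def, if_neg hs1, if_neg (not_le.mpr hlt)]
        · subst heq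
          simp only [hh_def, if_neg hs1, if_pos le_rfl, hgp0]
      have hsetAB : Icc (-b - a) (-b) ∪ Icc (-b) b = Icc (-b - a) b :=
        Icc_union_Icc_eq_Icc (by linarith) (by linarith)
      have hsetABC : Icc (-b - a) b ∪ Icc b (b + a) = Icc (-b - a) (b + a) :=
        Icc_union_Icc_eq_Icc (by linarith) (by linarith)
      have hstep : ∀ t ∈ Icc (-b - a) (b + a),
          HasDerivWithinAt h (Φ (h t)) (Icc (-b - a) (b + a)) t := by
        intro t ht
        have hA : HasDerivWithinAt h (Φ (h t)) (Icc (-b - a) (-b)) t := by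
          by_cases htA : t ∈ Icc (-b - a) (-b)
          · have h1 : HasDerivWithinAt gm (Φ (gm t)) (Icc (-b - a) (-b)) t :=
              (hgm t ⟨htA.1, by linarith [htA.2]⟩).mono
                (Icc_subset_Icc le_rfl (by linarith))
            rw [hEqA t htA]
            exact h1.congr (fun s hs => hEqA s hs) (hEqA t htA)
          · exact HasDerivWithinAt.mono
              (HasFDerivWithinAt.of_notMem_closure (by rwa [isClosed_Icc.closure_eq]) :
                HasDerivWithinAt h (Φ (h t)) (Icc (-b-a) (-b)) t) le_rfl
        have hB : HasDerivWithinAt h (Φ (h t)) (Icc (-b) b) t := by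
          by_cases htB : t ∈ Icc (-b) b
          · have h1 : HasDerivWithinAt f (Φ (f t)) (Icc (-b) b) t := hf t htB
            rw [hEqB t htB]
            exact h1.congr (fun s hs => hEqB s hs) (hEqB t htB)
          · exact HasFDerivWithinAt.of_notMem_closure (by rwa [isClosed_Icc.closure_eq])
        have hC : HasDerivWithinAt h (Φ (h t)) (Icc b (b + a)) t := by
          by_cases htC : t ∈ Icc b (b + a)
          · have h1 : HasDerivWithinAt gp (Φ (gp t)) (Icc b (b + a)) t :=
              (hgp t ⟨by linarith [htC.1], htC.2⟩).mono
                (Icc_subset_Icc (by linarith) le_rfl)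
            rw [hEqC t htC]
            exact h1.congr (fun s hs => hEqC s hs) (hEqC t htC)
          · exact HasFDerivWithinAt.of_notMem_closure (by rwa [isClosed_Icc.closure_eq])
        have := (hA.union hB).union hC
        rwa [hsetAB, hsetABC] at this
      refine ⟨h, ?_, ?_⟩
      · rw [hEqB 0 ⟨by linarith, by linarith⟩]; exact hf0
      · intro t ht
        have e2 : ((n+1:ℕ)+1 : ℝ) * a = b + a := by rw [hb_def]; push_cast; ring
        rw [e2] at ht ⊢
        rw [show -(b+a) = -b - a by ring] at ht ⊢
        exact hstep t ht
  choose F hF0 hFd using key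
  -- consistency
  have hcont : ∀ n : ℕ, ContinuousOn (F n) (Icc (-((n+1 : ℝ) * a)) ((n+1 : ℝ) * a)) :=
    fun n t ht => (hFd n t ht).continuousWithinAt
  have hposn : ∀ n : ℕ, 0 < ((n:ℝ)+1) * a := by
    intro n; positivity
  have hcons : ∀ (n m : ℕ), n ≤ m → ∀ t ∈ Icc (-((n+1 : ℝ) * a)) ((n+1 : ℝ) * a),
      F n t = F m t := by
    intro n m hnm t ht
    have hle : ((n:ℝ)+1) * a ≤ ((m:ℝ)+1) * a := by
      apply mul_le_mul_of_nonneg_right _ ha.le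
      exact_mod_cast Nat.add_le_add_right hnm 1
    have hsub : Icc (-((n+1 : ℝ) * a)) ((n+1 : ℝ) * a) ⊆
        Icc (-((m+1 : ℝ) * a)) ((m+1 : ℝ) * a) := Icc_subset_Icc (by linarith) hle
    have hsubo : Ioo (-((n+1 : ℝ) * a)) ((n+1 : ℝ) * a) ⊆
        Ioo (-((m+1 : ℝ) * a)) ((m+1 : ℝ) * a) := Ioo_subset_Ioo (by linarith) hle
    refine ODE_solution_unique_of_mem_Icc (v := fun _ => Φ) (s := fun _ => univ)
      (fun _ _ => hΦ.lipschitzOnWith) (t₀ := 0)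
      (a := -((n+1 : ℝ) * a)) (b := ((n+1 : ℝ) * a)) ?_ (hcont n) ?_ (fun _ _ => trivial)
      ((hcont m).mono hsub) ?_ (fun _ _ => trivial) ?_ ht
    · exact ⟨by linarith [hposn n], hposn n⟩
    · intro s hs
      exact (hFd n s (Ioo_subset_Icc_self hs)).hasDerivAt (Icc_mem_nhds hs.1 hs.2)
    · intro s hs
      exact (hFd m s (Ioo_subset_Icc_self (hsubo hs))).hasDerivAt
        (Icc_mem_nhds (hsubo hs).1 (hsubo hs).2)
    · rw [hF0 n, hF0 m]
  -- build global solution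
  set N : ℝ → ℕ := fun t => ⌈|t| / a⌉₊ with hN_def
  have hNmem : ∀ t : ℝ, |t| ≤ (N t : ℝ) * a := by
    intro t
    have h1 : |t| / a ≤ (N t : ℝ) := Nat.le_ceil _
    calc |t| = (|t| / a) * a := by field_simp
      _ ≤ (N t : ℝ) * a := mul_le_mul_of_nonneg_right h1 ha.le
  have hmem : ∀ t : ℝ, t ∈ Icc (-((N t + 1 : ℝ) * a)) ((N t + 1 : ℝ) * a) := by
    intro t
    have h1 : |t| ≤ ((N t : ℝ) + 1) * a := by nlinarith [hNmem t]
    exact ⟨by linarith [neg_abs_le t], by linarith [le_abs_self t]⟩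
  refine ⟨fun t => F (N t) t, ?_, ?_⟩
  · have : N 0 = 0 := by simp [hN_def]
    show F (N 0) 0 = x₀
    rw [this]; exact hF0 0
  · intro t
    set m : ℕ := N t + 1 with hm_def
    have hloc : ∀ s ∈ Metric.ball t a, F (N s) s = F m s := by
      intro s hs
      have habs : |s| < |t| + a := by
        have := abs_sub_abs_le_abs_sub s t
        have h2 : |s - t| < a := by rwa [Metric.mem_ball, Real.dist_eq] at hs
        linarith
      have hNs : N s ≤ m := by
        rw [hm_def, hN_def]
        simp only
        have : |s| / a ≤ (⌈|t| / a⌉₊ : ℝ) + 1 := by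
          rw [div_le_iff₀ ha]
          have := Nat.le_ceil (|t| / a)
          have h3 : |t| ≤ (⌈|t| / a⌉₊ : ℝ) * a := hNmem t
          nlinarith
        calc ⌈|s| / a⌉₊ ≤ ⌈((⌈|t| / a⌉₊ : ℝ) + 1)⌉₊ := Nat.ceil_le_ceil this
          _ = ⌈|t| / a⌉₊ + 1 := by
              rw [show ((⌈|t| / a⌉₊ : ℝ) + 1) = ((⌈|t| / a⌉₊ + 1 : ℕ) : ℝ) by push_cast; ring,
                Nat.ceil_natCast]
      exact hcons (N s) m hNs s (hmem s)
    have hint : t ∈ Ioo (-((m+1 : ℝ) * a)) ((m+1 : ℝ) * a) := by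
      have h1 : |t| ≤ ((N t : ℝ) + 1) * a := by nlinarith [hNmem t]
      have h2 : ((N t : ℝ) + 1) * a < ((m : ℝ) + 1) * a := by
        rw [hm_def]; push_cast; nlinarith
      exact ⟨by linarith [neg_abs_le t], by linarith [le_abs_self t]⟩
    have hFm : HasDerivAt (F m) (Φ (F m t)) t :=
      (hFd m t (Ioo_subset_Icc_self hint)).hasDerivAt (Icc_mem_nhds hint.1 hint.2)
    have heq : (fun s => F (N s) s) =ᶠ[nhds t] F m :=
      Filter.eventuallyEq_of_mem (Metric.ball_mem_nhds t ha) hloc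
    have htt : F (N t) t = F m t := hloc t (Metric.mem_ball_self ha)
    show HasDerivAt (fun s => F (N s) s) (Φ (F (N t) t)) t
    rw [htt]
    exact hFm.congr_of_eventuallyEq heq


end ODEGlobal

/-- existence and uniqueness of the mean field characteristic flow:
for every Borel probability measure `μin` on `ℝ^d` with finite first moment there
is a unique `Z : ℝ × ℝ^d → ℝ^d`, jointly continuous, with at most linear growth in
the second variable locally uniformly in time, such that for every `ζ`,
`t ↦ Z t ζ` is `C¹`, `Z 0 ζ = ζ` and
`∂ₜ Z t ζ = ∫ K (Z t ζ, z') d(Z(t,·)#μin)(z')`. -/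
theorem stmt2 (d : ℕ) (L : ℝ) (hL : 0 ≤ L)
    (K : EuclideanSpace ℝ (Fin d) × EuclideanSpace ℝ (Fin d) → EuclideanSpace ℝ (Fin d))
    (hK : ContDiff ℝ 1 K)
    (hK1 : ∀ z z' : EuclideanSpace ℝ (Fin d), K (z, z') = - K (z', z))
    (hK2 : (∀ z z' : EuclideanSpace ℝ (Fin d), ‖fderiv ℝ (fun w => K (w, z')) z‖ ≤ L) ∧
           (∀ z z' : EuclideanSpace ℝ (Fin d), ‖fderiv ℝ (fun w => K (z, w)) z'‖ ≤ L))
    (μin : Measure (EuclideanSpace ℝ (Fin d))) [IsProbabilityMeasure μin]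
    (hmom : ∫⁻ z, (‖z‖₊ : ℝ≥0∞) ∂μin ≠ ⊤) :
    ∃! Z : ℝ → EuclideanSpace ℝ (Fin d) → EuclideanSpace ℝ (Fin d),
      Continuous (Function.uncurry Z) ∧
      (∀ T : ℝ, 0 < T → ∃ C : ℝ, ∀ t : ℝ, |t| ≤ T → ∀ ζ, ‖Z t ζ‖ ≤ C * (1 + ‖ζ‖)) ∧
      (∀ ζ, Z 0 ζ = ζ) ∧
      (∀ ζ t, HasDerivAt (fun s => Z s ζ)
        (∫ z', K (Z t ζ, z') ∂(Measure.map (Z t) μin)) t) := by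
  classical
  obtain ⟨hK2₁, hK2₂⟩ := hK2
  -- basic facts about K
  have hK0 : ∀ z : EuclideanSpace ℝ (Fin d), K (z, z) = 0 := by
    intro z
    have h := hK1 z z
    have h2 : (2:ℝ) • K (z, z) = 0 := by
      rw [two_smul]; nth_rewrite 1 [h]; exact neg_add_cancel _
    simpa using (smul_eq_zero.mp h2).resolve_left (by norm_num)
  have Kd : Differentiable ℝ K := hK.differentiable one_ne_zero
  have hKlip1 : ∀ (b y y' : EuclideanSpace ℝ (Fin d)), ‖K (y, b) - K (y', b)‖ ≤ L * ‖y - y'‖ := by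
    intro b y y'
    have hdiff : ∀ x : EuclideanSpace ℝ (Fin d), DifferentiableAt ℝ (fun w => K (w, b)) x :=
      fun x => (Kd (x, b)).comp x (differentiableAt_id.prodMk (differentiableAt_const b))
    exact Convex.norm_image_sub_le_of_norm_fderiv_le (f := fun w => K (w, b))
      (fun x _ => hdiff x) (fun x _ => hK2₁ x b) convex_univ (Set.mem_univ y') (Set.mem_univ y)
  have hKlip2 : ∀ (b y y' : EuclideanSpace ℝ (Fin d)), ‖K (b, y) - K (b, y')‖ ≤ L * ‖y - y'‖ := by
    intro b y y'
    have hdiff : ∀ x : EuclideanSpace ℝ (Fin d), DifferentiableAt ℝ (fun w => K (b, w)) x :=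
      fun x => (Kd (b, x)).comp x ((differentiableAt_const b).prodMk differentiableAt_id)
    exact Convex.norm_image_sub_le_of_norm_fderiv_le (f := fun w => K (b, w))
      (fun x _ => hdiff x) (fun x _ => hK2₂ b x) convex_univ (Set.mem_univ y') (Set.mem_univ y)
  have hKlip : ∀ (y b y' b' : EuclideanSpace ℝ (Fin d)),
      ‖K (y, b) - K (y', b')‖ ≤ L * ‖y - y'‖ + L * ‖b - b'‖ := by
    intro y b y' b'
    calc ‖K (y, b) - K (y', b')‖
        = ‖(K (y, b) - K (y', b)) + (K (y', b) - K (y', b'))‖ := by congr 1; abel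
      _ ≤ ‖K (y, b) - K (y', b)‖ + ‖K (y', b) - K (y', b')‖ := norm_add_le _ _
      _ ≤ L * ‖y - y'‖ + L * ‖b - b'‖ := add_le_add (hKlip1 _ _ _) (hKlip2 _ _ _)
  have hKb : ∀ y b : EuclideanSpace ℝ (Fin d), ‖K (y, b)‖ ≤ L * ‖y - b‖ := by
    intro y b
    have := hKlip1 b y b
    rwa [hK0 b, sub_zero] at this
  -- integrability of the weight
  have hInt : Integrable (fun z : EuclideanSpace ℝ (Fin d) => ‖z‖) μin := by
    refine ⟨continuous_norm.aestronglyMeasurable, ?_⟩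
    show (∫⁻ z, ((‖(‖z‖)‖₊ : ℝ≥0) : ℝ≥0∞) ∂μin) < ⊤
    simp only [nnnorm_norm]
    exact lt_top_iff_ne_top.mpr hmom
  have haffInt : ∀ a b : ℝ, Integrable (fun z : EuclideanSpace ℝ (Fin d) => a + b * ‖z‖) μin :=
    fun a b => (integrable_const a).add (hInt.const_mul b)
  set M := ∫ z, ‖z‖ ∂μin with hM_def
  have hM0 : 0 ≤ M := integral_nonneg fun z => norm_nonneg z
  have haff : ∀ a b : ℝ, ∫ z, (a + b * ‖z‖) ∂μin = a + b * M := by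
    intro a b
    rw [integral_add (integrable_const a) (hInt.const_mul b), integral_const,
      MeasureTheory.integral_const_mul]
    simp [measure_univ, hM_def]
  -- integrability of the kernel integrand
  have hIntK : ∀ (v : EuclideanSpace ℝ (Fin d) →ᵇ EuclideanSpace ℝ (Fin d))
      (y : EuclideanSpace ℝ (Fin d)),
      Integrable (fun z' => K (y, Zmap v z')) μin := by
    intro v y
    refine Integrable.mono' (haffInt (L * ‖y‖ + L * (1 + ‖v‖)) (L * (1 + ‖v‖))) ?_ ?_
    · exact (hK.continuous.comp
        (continuous_const.prodMk (Zmap_continuous v))).aestronglyMeasurable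
    · filter_upwards with z'
      have h1 : ‖K (y, Zmap v z')‖ ≤ L * ‖y - Zmap v z'‖ := hKb _ _
      have h2 : ‖y - Zmap v z'‖ ≤ ‖y‖ + ‖Zmap v z'‖ := norm_sub_le _ _
      have h3 : ‖Zmap v z'‖ ≤ (1 + ‖v‖) * (1 + ‖z'‖) := norm_Zmap_le v z'
      nlinarith [norm_nonneg (y - Zmap v z'), norm_nonneg z', norm_nonneg v]
  -- integral norm estimates
  have hInorm : ∀ (v : EuclideanSpace ℝ (Fin d) →ᵇ EuclideanSpace ℝ (Fin d))
      (ζ : EuclideanSpace ℝ (Fin d)),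
      ‖∫ z', K (Zmap v ζ, Zmap v z') ∂μin‖ ≤ (L * (1 + ‖v‖)) * ((1 + ‖ζ‖) + (1 + M)) := by
    intro v ζ
    refine (norm_integral_le_of_norm_le
      (haffInt (L * ((1 + ‖v‖) * ((1 + ‖ζ‖) + 1))) (L * (1 + ‖v‖))) ?_).trans ?_
    · filter_upwards with z'
      have h1 := hKb (Zmap v ζ) (Zmap v z')
      have h2 := norm_Zmap_pair v ζ z'
      nlinarith [norm_nonneg v, norm_nonneg z']
    · rw [haff]; apply le_of_eq; ring
  have hIdiff : ∀ (v w : EuclideanSpace ℝ (Fin d) →ᵇ EuclideanSpace ℝ (Fin d))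
      (ζ : EuclideanSpace ℝ (Fin d)),
      ‖(∫ z', K (Zmap v ζ, Zmap v z') ∂μin) - ∫ z', K (Zmap w ζ, Zmap w z') ∂μin‖ ≤
        (L * ‖v - w‖) * ((1 + ‖ζ‖) + (1 + M)) := by
    intro v w ζ
    rw [← integral_sub (hIntK v (Zmap v ζ)) (hIntK w (Zmap w ζ))]
    refine (norm_integral_le_of_norm_le
      (haffInt (L * ((1 + ‖ζ‖) * ‖v - w‖) + L * ‖v - w‖) (L * ‖v - w‖)) ?_).trans ?_
    · filter_upwards with z'
      have h0 := hKlip (Zmap v ζ) (Zmap v z') (Zmap w ζ) (Zmap w z')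
      have h1 := norm_Zmap_sub_le v w ζ
      have h2 := norm_Zmap_sub_le v w z'
      nlinarith [norm_nonneg (v - w), norm_nonneg z']
    · rw [haff]; apply le_of_eq; ring
  -- the vector field Φ on the Banach space of weighted displacements
  have hΦex : ∃ Φ : (EuclideanSpace ℝ (Fin d) →ᵇ EuclideanSpace ℝ (Fin d)) →
      (EuclideanSpace ℝ (Fin d) →ᵇ EuclideanSpace ℝ (Fin d)),
      ∀ v ζ, Φ v ζ = (1 + ‖ζ‖)⁻¹ • ∫ z', K (Zmap v ζ, Zmap v z') ∂μin := by
    have hcont : ∀ v : EuclideanSpace ℝ (Fin d) →ᵇ EuclideanSpace ℝ (Fin d),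
        Continuous (fun ζ => (1 + ‖ζ‖)⁻¹ • ∫ z', K (Zmap v ζ, Zmap v z') ∂μin) := by
      intro v
      have hJ : LipschitzWith (Real.toNNReal L)
          (fun y => ∫ z', K (y, Zmap v z') ∂μin) := by
        apply LipschitzWith.of_dist_le_mul
        intro y y'
        rw [dist_eq_norm, dist_eq_norm, Real.coe_toNNReal _ hL,
          ← integral_sub (hIntK v y) (hIntK v y')]
        refine (norm_integral_le_of_norm_le (integrable_const (L * ‖y - y'‖)) ?_).trans ?_
        · filter_upwards with z'; exact hKlip1 _ _ _
        · rw [integral_const]; simp [measure_univ]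
      exact ((continuous_const.add continuous_norm).inv₀ (fun ζ => (onen ζ).ne')).smul
        (hJ.continuous.comp (Zmap_continuous v))
    have hbd : ∀ (v : EuclideanSpace ℝ (Fin d) →ᵇ EuclideanSpace ℝ (Fin d)) ζ,
        ‖(1 + ‖ζ‖)⁻¹ • ∫ z', K (Zmap v ζ, Zmap v z') ∂μin‖ ≤
          (L * (1 + ‖v‖)) * (1 + (1 + M)) := by
      intro v ζ
      rw [norm_smul, Real.norm_eq_abs, abs_of_nonneg (inv_nonneg.mpr (onen ζ).le)]
      exact weight_est (norm_nonneg ζ) (hInorm v ζ)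
        (by positivity) (by linarith)
    exact ⟨fun v => BoundedContinuousFunction.ofNormedAddCommGroup _ (hcont v) _ (hbd v),
      fun v ζ => rfl⟩
  obtain ⟨Φ, hΦ⟩ := hΦex
  have hΦlip : LipschitzWith (Real.toNNReal (L * (2 + M))) Φ := by
    apply LipschitzWith.of_dist_le_mul
    intro v w
    rw [Real.coe_toNNReal _ (by nlinarith : (0:ℝ) ≤ L * (2 + M))]
    refine (BoundedContinuousFunction.dist_le
      (mul_nonneg (by nlinarith : (0:ℝ) ≤ L * (2 + M)) dist_nonneg)).mpr ?_
    intro ζ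
    rw [dist_eq_norm, dist_eq_norm, hΦ v ζ, hΦ w ζ, ← smul_sub, norm_smul, Real.norm_eq_abs,
      abs_of_nonneg (inv_nonneg.mpr (onen ζ).le)]
    have h1 := hIdiff v w ζ
    have := weight_est (norm_nonneg ζ) h1 (by positivity) (by linarith)
    calc (1 + ‖ζ‖)⁻¹ * ‖(∫ z', K (Zmap v ζ, Zmap v z') ∂μin) -
          ∫ z', K (Zmap w ζ, Zmap w z') ∂μin‖ ≤ (L * ‖v - w‖) * (1 + (1 + M)) := this
      _ = L * (2 + M) * ‖v - w‖ := by ring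
  -- global solution of the ODE in the Banach space
  obtain ⟨v, hv0, hvd⟩ := ode_global Φ _ hΦlip 0
  have hvcont : Continuous v := continuous_iff_continuousAt.mpr fun t => (hvd t).continuousAt
  refine ⟨fun t ζ => Zmap (v t) ζ, ⟨?_, ?_, ?_, ?_⟩, ?_⟩
  · -- joint continuity
    show Continuous fun p : ℝ × EuclideanSpace ℝ (Fin d) => p.2 + (1 + ‖p.2‖) • (v p.1) p.2
    have h1 : Continuous fun p : ℝ × EuclideanSpace ℝ (Fin d) => (v p.1) p.2 :=
      continuous_eval.comp
        ((hvcont.comp continuous_fst).prodMk continuous_snd)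
    exact continuous_snd.add
      ((continuous_const.add (continuous_norm.comp continuous_snd)).smul h1)
  · -- linear growth
    intro T hT
    obtain ⟨C0, hC0⟩ := isCompact_Icc.exists_bound_of_continuousOn
      (s := Icc (-T) T) hvcont.continuousOn
    refine ⟨1 + C0, fun t ht ζ => ?_⟩
    have h1 : ‖v t‖ ≤ C0 := hC0 t (by rcases abs_le.mp ht with ⟨h1, h2⟩; exact ⟨h1, h2⟩)
    have h2 : ‖(v t) ζ‖ ≤ ‖v t‖ := norm_coe_le_norm _ _
    show ‖Zmap (v t) ζ‖ ≤ (1 + C0) * (1 + ‖ζ‖)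
    have h3 : ‖Zmap (v t) ζ‖ ≤ ‖ζ‖ + (1 + ‖ζ‖) * ‖(v t) ζ‖ := by
      refine (norm_add_le _ _).trans ?_
      rw [norm_smul, Real.norm_of_nonneg (onen ζ).le]
    nlinarith [norm_nonneg ζ, norm_nonneg ((v t) ζ)]
  · -- initial condition
    intro ζ
    show Zmap (v 0) ζ = ζ
    rw [hv0]
    simp [Zmap]
  · -- derivative
    intro ζ t
    have hev := (BoundedContinuousFunction.evalCLM (𝕜 := ℝ)
      (β := EuclideanSpace ℝ (Fin d)) ζ).hasFDerivAt.comp_hasDerivAt t (hvd t)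
    have h2 : HasDerivAt (fun s => Zmap (v s) ζ) ((1 + ‖ζ‖) • (Φ (v t)) ζ) t :=
      (hev.const_smul ((1:ℝ) + ‖ζ‖)).const_add ζ
    have h3 : (1 + ‖ζ‖) • (Φ (v t)) ζ =
        ∫ z', K (Zmap (v t) ζ, z') ∂(Measure.map (fun ζ' => Zmap (v t) ζ') μin) := by
      have hcontf : Continuous (fun z' : EuclideanSpace ℝ (Fin d) => K (Zmap (v t) ζ, z')) :=
        hK.continuous.comp (continuous_const.prodMk continuous_id)
      rw [hΦ (v t) ζ, smul_smul, mul_inv_cancel₀ (onen ζ).ne', one_smul,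
        MeasureTheory.integral_map (Zmap_continuous (v t)).aemeasurable
          hcontf.aestronglyMeasurable]
    rw [← h3]
    exact h2
  · -- uniqueness
    rintro W ⟨hWc, hWg, hW0, hWd⟩
    have hWcs : ∀ s : ℝ, Continuous (W s) := fun s =>
      hWc.comp (continuous_const.prodMk continuous_id)
    have hWct : ∀ ζ, Continuous (fun s => W s ζ) := fun ζ =>
      hWc.comp (continuous_id.prodMk continuous_const)
    -- growth with nonnegative constant
    have hgrow : ∀ T : ℝ, 0 < T → ∃ C : ℝ, 0 ≤ C ∧ ∀ s, |s| ≤ T → ∀ ζ, ‖W s ζ‖ ≤ C * (1 + ‖ζ‖) := by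
      intro T hT
      obtain ⟨C, hC⟩ := hWg T hT
      refine ⟨C, ?_, hC⟩
      have h1 := hC 0 (by rw [abs_zero]; exact hT.le) 0
      have h2 : ‖(0 : EuclideanSpace ℝ (Fin d))‖ = 0 := norm_zero
      nlinarith [norm_nonneg (W 0 (0 : EuclideanSpace ℝ (Fin d)))]
    -- the induced path in the Banach space
    have hwp_ex : ∀ t : ℝ, ∃ u : EuclideanSpace ℝ (Fin d) →ᵇ EuclideanSpace ℝ (Fin d),
        ∀ ζ, u ζ = (1 + ‖ζ‖)⁻¹ • (W t ζ - ζ) := by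
      intro t
      obtain ⟨C, hC0, hC⟩ := hgrow (|t| + 1) (by positivity)
      have hC' : ∀ ζ, ‖W t ζ‖ ≤ C * (1 + ‖ζ‖) := hC t (by linarith)
      have hcont : Continuous (fun ζ : EuclideanSpace ℝ (Fin d) =>
          (1 + ‖ζ‖)⁻¹ • (W t ζ - ζ)) :=
        ((continuous_const.add continuous_norm).inv₀ fun ζ => (onen ζ).ne').smul
          ((hWcs t).sub continuous_id)
      refine ⟨BoundedContinuousFunction.ofNormedAddCommGroup _ hcont (C + 1) ?_, fun ζ => rfl⟩
      intro ζ
      rw [norm_smul, Real.norm_eq_abs, abs_of_nonneg (inv_nonneg.mpr (onen ζ).le)]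
      have h1 : ‖W t ζ - ζ‖ ≤ C * (1 + ‖ζ‖) + ‖ζ‖ :=
        (norm_sub_le _ _).trans (by linarith [hC' ζ])
      have h2 : ‖W t ζ - ζ‖ ≤ (C + 1) * ((1 + ‖ζ‖) + 0) := by nlinarith [norm_nonneg ζ]
      have := weight_est (norm_nonneg ζ) h2 (by linarith) le_rfl
      linarith [this]
    choose wp hwp using hwp_ex
    have hrep : ∀ t ζ, Zmap (wp t) ζ = W t ζ := fun t => Zmap_repr (wp t) (W t) (hwp t)
    -- the pointwise derivative, expressed with the base measure
    have hWmeas : ∀ s : ℝ, AEMeasurable (W s) μin := fun s => (hWcs s).measurable.aemeasurable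
    have hFder : ∀ ζ s, HasDerivAt (fun r => W r ζ) (∫ z', K (W s ζ, W s z') ∂μin) s := by
      intro ζ s
      have h := hWd ζ s
      have hcontf : Continuous (fun z' : EuclideanSpace ℝ (Fin d) => K (W s ζ, z')) :=
        hK.continuous.comp (continuous_const.prodMk continuous_id)
      rwa [MeasureTheory.integral_map (hWmeas s) hcontf.aestronglyMeasurable] at h
    -- uniform bound on the velocity
    have hFb : ∀ T : ℝ, 0 < T → ∃ B : ℝ, 0 ≤ B ∧ ∀ s, |s| ≤ T → ∀ ζ,
        ‖∫ z', K (W s ζ, W s z') ∂μin‖ ≤ B * (1 + ‖ζ‖) := by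
      intro T hT
      obtain ⟨C, hC0, hC⟩ := hgrow T hT
      refine ⟨L * C * (1 + (1 + M)), by positivity, ?_⟩
      intro s hs ζ
      have key : ‖∫ z', K (W s ζ, W s z') ∂μin‖ ≤
          (L * C) * ((1 + ‖ζ‖) + (1 + M)) := by
        refine (norm_integral_le_of_norm_le
          (haffInt (L * (C * (1 + ‖ζ‖)) + L * C) (L * C)) ?_).trans ?_
        · filter_upwards with z'
          have h1 := hKb (W s ζ) (W s z')
          have h2 := hC s hs ζ
          have h3 := hC s hs z'
          have h4 : ‖W s ζ - W s z'‖ ≤ ‖W s ζ‖ + ‖W s z'‖ := norm_sub_le _ _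
          nlinarith [norm_nonneg z', norm_nonneg (W s ζ - W s z')]
        · rw [haff]; apply le_of_eq; ring
      refine key.trans ?_
      have h5 : (0:ℝ) ≤ L * C := by positivity
      nlinarith [norm_nonneg ζ, mul_nonneg (mul_nonneg h5 hM0) (norm_nonneg ζ),
        mul_nonneg h5 (norm_nonneg ζ), mul_nonneg h5 hM0]

    -- continuity of the velocity in time
    have hFcont : ∀ ζ, Continuous fun s => ∫ z', K (W s ζ, W s z') ∂μin := by
      intro ζ
      rw [continuous_iff_continuousAt]
      intro s₀
      obtain ⟨C, hC0, hC⟩ := hgrow (|s₀| + 1) (by positivity)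
      apply MeasureTheory.continuousAt_of_dominated
        (bound := fun z' => (L * (C * (1 + ‖ζ‖)) + L * C) + (L * C) * ‖z'‖)
      · filter_upwards with s
        exact (hK.continuous.comp (continuous_const.prodMk (hWcs s))).aestronglyMeasurable
      · filter_upwards [Metric.ball_mem_nhds s₀ one_pos] with s hs
        filter_upwards with z'
        have hsle : |s| ≤ |s₀| + 1 := by
          have h6 : |s - s₀| < 1 := by rwa [Metric.mem_ball, Real.dist_eq] at hs
          calc |s| = |s₀ + (s - s₀)| := by ring_nf
            _ ≤ |s₀| + |s - s₀| := abs_add_le _ _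
            _ ≤ |s₀| + 1 := by linarith
        have h1 := hKb (W s ζ) (W s z')
        have h2 := hC s hsle ζ
        have h3 := hC s hsle z'
        have h4 : ‖W s ζ - W s z'‖ ≤ ‖W s ζ‖ + ‖W s z'‖ := norm_sub_le _ _
        nlinarith [norm_nonneg z', norm_nonneg (W s ζ - W s z')]
      · exact haffInt _ _
      · filter_upwards with z'
        exact (hK.continuous.comp ((hWct ζ).prodMk (hWct z'))).continuousAt
    -- the fundamental theorem of calculus, pointwise
    have hWftc : ∀ ζ (a b : ℝ),
        (∫ r in a..b, (∫ z', K (W r ζ, W r z') ∂μin)) = W b ζ - W a ζ :=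
      fun ζ a b => intervalIntegral.integral_eq_sub_of_hasDerivAt (fun r _ => hFder ζ r)
        ((hFcont ζ).intervalIntegrable a b)
    -- continuity of the path
    have hwpcont : Continuous wp := by
      rw [continuous_iff_continuousAt]
      intro t₀
      obtain ⟨B, hB0, hB⟩ := hFb (|t₀| + 1) (by positivity)
      have hlip : ∀ s ∈ Metric.ball t₀ 1, ∀ s' ∈ Metric.ball t₀ 1,
          dist (wp s) (wp s') ≤ B * dist s s' := by
        intro s hs s' hs'
        have hs1 : |s - t₀| < 1 := by rwa [Metric.mem_ball, Real.dist_eq] at hs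
        have hs'1 : |s' - t₀| < 1 := by rwa [Metric.mem_ball, Real.dist_eq] at hs'
        have habs : ∀ r : ℝ, min s' s ≤ r → r ≤ max s' s → |r| ≤ |t₀| + 1 := by
          intro r h7 h8
          rcases abs_lt.mp hs1 with ⟨ha1, ha2⟩
          rcases abs_lt.mp hs'1 with ⟨hb1, hb2⟩
          have h9 : r ≤ max s' s := h8
          have h10 : max s' s ≤ |t₀| + 1 := by
            apply max_le <;> [skip; skip] <;>
              (first
                | (have := le_abs_self t₀; linarith)
                | (have := le_abs_self t₀; linarith))
          have h11 : -(|t₀| + 1) ≤ min s' s := by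
            apply le_min <;> (have := neg_abs_le t₀; linarith)
          exact abs_le.mpr ⟨by linarith, by linarith⟩
        refine (BoundedContinuousFunction.dist_le (mul_nonneg hB0 dist_nonneg)).mpr ?_
        intro ζ
        rw [dist_eq_norm, hwp s ζ, hwp s' ζ, ← smul_sub]
        have heq : W s ζ - ζ - (W s' ζ - ζ) = W s ζ - W s' ζ := by abel
        rw [heq, norm_smul, Real.norm_eq_abs, abs_of_nonneg (inv_nonneg.mpr (onen ζ).le)]
        have h1 : W s ζ - W s' ζ = ∫ r in s'..s, (∫ z', K (W r ζ, W r z') ∂μin) :=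
          (hWftc ζ s' s).symm
        rw [h1]
        have h2 : ∀ r ∈ Set.uIoc s' s, ‖∫ z', K (W r ζ, W r z') ∂μin‖ ≤ B * (1 + ‖ζ‖) := by
          intro r hr
          refine hB r ?_ ζ
          exact habs r (le_of_lt (by simpa [Set.uIoc, min_comm, max_comm] using hr.1))
            (by simpa [Set.uIoc] using hr.2)
        have h3 := intervalIntegral.norm_integral_le_of_norm_le_const h2
        calc (1 + ‖ζ‖)⁻¹ * ‖∫ r in s'..s, (∫ z', K (W r ζ, W r z') ∂μin)‖
            ≤ (1 + ‖ζ‖)⁻¹ * ((B * (1 + ‖ζ‖)) * |s - s'|) :=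
              mul_le_mul_of_nonneg_left h3 (inv_nonneg.mpr (onen ζ).le)
          _ = (B * |s - s'|) * ((1 + ‖ζ‖)⁻¹ * (1 + ‖ζ‖)) := by ring
          _ = B * dist s s' := by
              rw [inv_mul_cancel₀ (onen ζ).ne', Real.dist_eq]; ring
      have hlip' : LipschitzOnWith (Real.toNNReal B) wp (Metric.ball t₀ 1) := by
        apply LipschitzOnWith.of_dist_le_mul
        intro x hx y hy
        rw [Real.coe_toNNReal _ hB0]
        exact hlip x hx y hy
      exact hlip'.continuousOn.continuousAt (Metric.isOpen_ball.mem_nhds (Metric.mem_ball_self one_pos))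
    -- the path solves the Banach-space ODE
    have hG : Continuous fun s => Φ (wp s) := hΦlip.continuous.comp hwpcont
    have hGev : ∀ s ζ, (Φ (wp s)) ζ = (1 + ‖ζ‖)⁻¹ • ∫ z', K (W s ζ, W s z') ∂μin := by
      intro s ζ
      rw [hΦ (wp s) ζ]
      congr 1
      apply integral_congr_ae
      filter_upwards with z'
      rw [hrep s ζ, hrep s z']
    have hkey : ∀ t, wp t = wp 0 + ∫ r in (0:ℝ)..t, Φ (wp r) := by
      intro t
      apply BoundedContinuousFunction.ext
      intro ζ
      have hGI : IntervalIntegrable (fun r => Φ (wp r)) MeasureTheory.volume 0 t :=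
        hG.intervalIntegrable 0 t
      have h2 : ((∫ r in (0:ℝ)..t, Φ (wp r)) : EuclideanSpace ℝ (Fin d) →ᵇ EuclideanSpace ℝ (Fin d)) ζ
          = ∫ r in (0:ℝ)..t, (Φ (wp r)) ζ :=
        ((BoundedContinuousFunction.evalCLM (𝕜 := ℝ)
          (β := EuclideanSpace ℝ (Fin d)) ζ).intervalIntegral_comp_comm hGI).symm
      have h3 : (wp 0 + ∫ r in (0:ℝ)..t, Φ (wp r)) ζ
          = wp 0 ζ + ((∫ r in (0:ℝ)..t, Φ (wp r)) : EuclideanSpace ℝ (Fin d) →ᵇ EuclideanSpace ℝ (Fin d)) ζ := rfl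
      rw [h3, h2]
      have h4 : (∫ r in (0:ℝ)..t, (Φ (wp r)) ζ)
          = ∫ r in (0:ℝ)..t, (1 + ‖ζ‖)⁻¹ • (∫ z', K (W r ζ, W r z') ∂μin) := by
        apply intervalIntegral.integral_congr
        intro r _
        exact hGev r ζ
      rw [h4, intervalIntegral.integral_smul, hWftc ζ 0 t, hwp t ζ, hwp 0 ζ, ← smul_add]
      congr 1
      abel
    have hwd : ∀ t, HasDerivAt wp (Φ (wp t)) t := by
      intro t
      have h1 : HasDerivAt (fun u => wp 0 + ∫ r in (0:ℝ)..u, Φ (wp r)) (Φ (wp t)) t :=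
        (intervalIntegral.integral_hasDerivAt_right (hG.intervalIntegrable 0 t)
          (hG.stronglyMeasurableAtFilter MeasureTheory.volume (nhds t)) hG.continuousAt).const_add (wp 0)
      exact h1.congr_of_eventuallyEq (Filter.Eventually.of_forall hkey)
    have hwp0 : wp 0 = 0 := by
      apply BoundedContinuousFunction.ext
      intro ζ
      rw [hwp 0 ζ, hW0 ζ]
      simp
    have huniq : wp = v := ode_unique Φ _ hΦlip hwd hvd (by rw [hwp0, hv0])
    funext t ζ
    rw [← hrep t ζ, huniq]
end
end

section
/- Assume the interaction kernel K satisfies (HK1)-(HK2). For each Z_N^in = (z_1^in,…,z_N^in) ∈ (ℝ^d)^N, the solution T_t Z_N^in = (z_1(t),…,z_N(t)) of the N-particle ODE system and the mean field characteristic flow Z satisfy z_i(t) = Z(t, z_i^in, μ_{Z_N^in}) for all i = 1,…,N and all t ∈ ℝ. -/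
open MeasureTheory Real Filter Topology
open scoped ENNReal NNReal

noncomputable section

/-- The empirical measure of an `N`-tuple of points in `ℝ^d`. -/
def empiricalMeasure {d N : ℕ} (z : Fin N → EuclideanSpace ℝ (Fin d)) :
    Measure (EuclideanSpace ℝ (Fin d)) :=
  (N : ℝ≥0∞)⁻¹ • ∑ j : Fin N, Measure.dirac (z j)

/-- Integral against an empirical measure is the average. -/
lemma integral_empiricalMeasure {d N : ℕ} (z : Fin N → EuclideanSpace ℝ (Fin d))
    (f : EuclideanSpace ℝ (Fin d) → EuclideanSpace ℝ (Fin d)) (hf : Continuous f) :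
    ∫ x, f x ∂(empiricalMeasure z) = (N : ℝ)⁻¹ • ∑ j : Fin N, f (z j) := by
  have hint : ∀ j : Fin N, Integrable f (Measure.dirac (z j)) := by
    intro j
    refine (integrable_const (f (z j))).congr ?_
    rw [Filter.EventuallyEq, ae_dirac_eq]
    simp
  rw [empiricalMeasure, integral_smul_measure, integral_finset_sum_measure (fun j _ => hint j)]
  congr 1
  · rw [ENNReal.toReal_inv]; simp
  · exact Finset.sum_congr rfl fun j _ => integral_dirac f (z j)

/-- the solution of the `N`-particle ODE system with initial data
`Zin` coincides with the mean field characteristic flow along the empirical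
measure of the initial data: `zᵢ(t) = Z(t, zᵢ^in, μ_{Zin})`. -/
theorem stmt3 (d : ℕ) (L : ℝ) (hL : 0 ≤ L)
    (K : EuclideanSpace ℝ (Fin d) × EuclideanSpace ℝ (Fin d) → EuclideanSpace ℝ (Fin d))
    (hK : ContDiff ℝ 1 K)
    (hK1 : ∀ z z' : EuclideanSpace ℝ (Fin d), K (z, z') = - K (z', z))
    (hK2 : (∀ z z' : EuclideanSpace ℝ (Fin d), ‖fderiv ℝ (fun w => K (w, z')) z‖ ≤ L) ∧
           (∀ z z' : EuclideanSpace ℝ (Fin d), ‖fderiv ℝ (fun w => K (z, w)) z'‖ ≤ L))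
    (N : ℕ) (hN : 1 ≤ N) (Zin : Fin N → EuclideanSpace ℝ (Fin d))
    -- the solution of the N-particle ODE system with initial data Zin
    (ZN : ℝ → Fin N → EuclideanSpace ℝ (Fin d))
    (hZN0 : ZN 0 = Zin)
    (hZNode : ∀ t : ℝ,
      HasDerivAt ZN (fun i => (N : ℝ)⁻¹ • ∑ j : Fin N, K (ZN t i, ZN t j)) t)
    -- the mean field characteristic flow with initial measure μ_{Zin}
    (Zc : ℝ → EuclideanSpace ℝ (Fin d) → EuclideanSpace ℝ (Fin d))
    (hZcCont : Continuous (Function.uncurry Zc))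
    (hZcGrowth : ∀ T : ℝ, 0 < T → ∃ C : ℝ, ∀ t : ℝ, |t| ≤ T → ∀ ζ,
      ‖Zc t ζ‖ ≤ C * (1 + ‖ζ‖))
    (hZc0 : ∀ ζ, Zc 0 ζ = ζ)
    (hZcode : ∀ ζ t, HasDerivAt (fun s => Zc s ζ)
      (∫ z', K (Zc t ζ, z') ∂(Measure.map (Zc t) (empiricalMeasure Zin))) t) :
    ∀ t : ℝ, ∀ i : Fin N, ZN t i = Zc t (Zin i) := by
  classical
  -- K is Lipschitz in each variable with constant L
  have hKdiff := hK.differentiable one_ne_zero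
  have hLip1 : ∀ (b a a' : EuclideanSpace ℝ (Fin d)), ‖K (a, b) - K (a', b)‖ ≤ L * ‖a - a'‖ := by
    intro b a a'
    have hdiff : ∀ x ∈ (Set.univ : Set (EuclideanSpace ℝ (Fin d))), DifferentiableAt ℝ (fun w => K (w, b)) x :=
      fun x _ => (hKdiff.comp (differentiable_id.prodMk (differentiable_const b))).differentiableAt
    exact Convex.norm_image_sub_le_of_norm_fderiv_le hdiff
      (fun x _ => hK2.1 x b) convex_univ (Set.mem_univ a') (Set.mem_univ a)
  have hLip2 : ∀ (a b b' : EuclideanSpace ℝ (Fin d)), ‖K (a, b) - K (a, b')‖ ≤ L * ‖b - b'‖ := by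
    intro a b b'
    have hdiff : ∀ x ∈ (Set.univ : Set (EuclideanSpace ℝ (Fin d))), DifferentiableAt ℝ (fun w => K (a, w)) x :=
      fun x _ => (hKdiff.comp ((differentiable_const a).prodMk differentiable_id)).differentiableAt
    exact Convex.norm_image_sub_le_of_norm_fderiv_le hdiff
      (fun x _ => hK2.2 a x) convex_univ (Set.mem_univ b') (Set.mem_univ b)
  have hKL : ∀ (a a' b b' : EuclideanSpace ℝ (Fin d)), ‖K (a, b) - K (a', b')‖ ≤ L * ‖a - a'‖ + L * ‖b - b'‖ := by
    intro a a' b b'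
    calc ‖K (a, b) - K (a', b')‖
        = ‖(K (a, b) - K (a', b)) + (K (a', b) - K (a', b'))‖ := by
          rw [sub_add_sub_cancel]
      _ ≤ ‖K (a, b) - K (a', b)‖ + ‖K (a', b) - K (a', b')‖ := norm_add_le _ _
      _ ≤ L * ‖a - a'‖ + L * ‖b - b'‖ := add_le_add (hLip1 b a a') (hLip2 a' b b')
  -- the vector field on (ℝ^d)^N
  set v : (Fin N → EuclideanSpace ℝ (Fin d)) → (Fin N → EuclideanSpace ℝ (Fin d)) :=
    fun x i => (N : ℝ)⁻¹ • ∑ j : Fin N, K (x i, x j) with hv_def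
  have hNpos : (0 : ℝ) < N := by exact_mod_cast Nat.lt_of_lt_of_le Nat.zero_lt_one hN
  -- v is Lipschitz with constant 2L
  have hvLip : LipschitzWith ⟨2 * L, by positivity⟩ v := by
    apply LipschitzWith.of_dist_le_mul
    intro x y
    change dist (v x) (v y) ≤ 2 * L * dist x y
    have hd : (0 : ℝ) ≤ 2 * L * dist x y := by positivity
    rw [dist_pi_le_iff hd]
    intro i
    rw [dist_eq_norm]
    have : v x i - v y i = (N : ℝ)⁻¹ • ∑ j : Fin N, (K (x i, x j) - K (y i, y j)) := by
      simp only [hv_def, ← smul_sub, Finset.sum_sub_distrib]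
    rw [this, norm_smul]
    have hsum : ‖∑ j : Fin N, (K (x i, x j) - K (y i, y j))‖ ≤
        ∑ j : Fin N, (L * dist x y + L * dist x y) := by
      refine le_trans (norm_sum_le _ _) (Finset.sum_le_sum fun j _ => ?_)
      refine le_trans (hKL (x i) (y i) (x j) (y j)) (add_le_add ?_ ?_)
      · exact mul_le_mul_of_nonneg_left (by rw [← dist_eq_norm]; exact dist_le_pi_dist x y i) hL
      · exact mul_le_mul_of_nonneg_left (by rw [← dist_eq_norm]; exact dist_le_pi_dist x y j) hL
    rw [Finset.sum_const, Finset.card_univ, Fintype.card_fin, nsmul_eq_mul] at hsum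
    have : ‖(N : ℝ)⁻¹‖ = (N : ℝ)⁻¹ := by
      rw [Real.norm_eq_abs, abs_of_nonneg (by positivity)]
    rw [this]
    calc (N : ℝ)⁻¹ * ‖∑ j : Fin N, (K (x i, x j) - K (y i, y j))‖
        ≤ (N : ℝ)⁻¹ * ((N : ℝ) * (L * dist x y + L * dist x y)) :=
          mul_le_mul_of_nonneg_left hsum (by positivity)
      _ = 2 * L * dist x y := by field_simp; ring
    -- done
  -- the mean field flow along each initial point
  set W : ℝ → Fin N → EuclideanSpace ℝ (Fin d) := fun t i => Zc t (Zin i) with hW_def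
  -- continuity of Zc t
  have hZct : ∀ t : ℝ, Continuous (Zc t) := by
    intro t
    exact hZcCont.comp (Continuous.prodMk_right t)
  -- compute the mean field RHS as an average
  have hRHS : ∀ (t : ℝ) (ζ : EuclideanSpace ℝ (Fin d)),
      (∫ z', K (Zc t ζ, z') ∂(Measure.map (Zc t) (empiricalMeasure Zin))) =
        (N : ℝ)⁻¹ • ∑ j : Fin N, K (Zc t ζ, Zc t (Zin j)) := by
    intro t ζ
    have hmeas : AEMeasurable (Zc t) (empiricalMeasure Zin) := (hZct t).aemeasurable
    have hKc : Continuous (fun z' : EuclideanSpace ℝ (Fin d) => K (Zc t ζ, z')) :=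
      hK.continuous.comp (Continuous.prodMk_right _)
    rw [MeasureTheory.integral_map hmeas hKc.aestronglyMeasurable]
    exact integral_empiricalMeasure Zin (fun x => K (Zc t ζ, Zc t x))
      (hKc.comp (hZct t))
  -- W satisfies the same ODE
  have hWode : ∀ t : ℝ, HasDerivAt W (v (W t)) t := by
    intro t
    rw [hasDerivAt_pi]
    intro i
    have := hZcode (Zin i) t
    rw [hRHS t (Zin i)] at this
    exact this
  -- ZN satisfies the ODE
  have hZNode' : ∀ t : ℝ, HasDerivAt ZN (v (ZN t)) t := hZNode
  -- initial condition
  have h0 : ZN 0 = W 0 := by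
    funext i
    rw [hZN0, hW_def]
    exact (hZc0 (Zin i)).symm
  -- uniqueness
  intro t i
  have key : ZN t = W t := by
    set b : ℝ := |t| + 1 with hb_def
    have hb : 0 < b := by positivity
    have ht_mem : t ∈ Set.Icc (-b) b := by
      constructor
      · linarith [neg_abs_le t]
      · linarith [le_abs_self t]
    have h0_mem : (0 : ℝ) ∈ Set.Ioo (-b) b := by
      constructor <;> [linarith [abs_nonneg t]; linarith [abs_nonneg t]]
    have := ODE_solution_unique_of_mem_Icc
      (v := fun _ x => v x) (s := fun _ => Set.univ)
      (fun _ _ => (hvLip.lipschitzOnWith))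
      h0_mem
      (fun s _ => (hZNode' s).continuousAt.continuousWithinAt)
      (fun s _ => hZNode' s)
      (fun _ _ => Set.mem_univ _)
      (fun s _ => (hWode s).continuousAt.continuousWithinAt)
      (fun s _ => hWode s)
      (fun _ _ => Set.mem_univ _)
      h0
    exact this ht_mem
  exact congrFun key i
end
end

section
/- (Dobrushin's stability estimate.) Assume the interaction kernel K satisfies (HK1)-(HK2) with constant L. Let μ_1^in, μ_2^in be Borel probability measures on ℝ^d with finite first moment, and for j = 1,2 and t ∈ ℝ set μ_j(t) := Z(t,·,μ_j^in)#μ_j^in, where Z is the mean field characteristic flow. Then for all t ∈ ℝ, dist_{MK,1}(μ_1(t), μ_2(t)) ≤ e^{2L|t|} dist_{MK,1}(μ_1^in, μ_2^in). -/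
open MeasureTheory Real Filter Topology
open scoped ENNReal NNReal

noncomputable section

/-- The set of couplings of two Borel measures on `ℝ^d`. -/
def couplings {d : ℕ} (μ ν : Measure (EuclideanSpace ℝ (Fin d))) :
    Set (Measure (EuclideanSpace ℝ (Fin d) × EuclideanSpace ℝ (Fin d))) :=
  {γ | γ.map Prod.fst = μ ∧ γ.map Prod.snd = ν}

/-- The Monge-Kantorovich distance with exponent 1 (with values in `ℝ≥0∞`). -/
def distMK1 {d : ℕ} (μ ν : Measure (EuclideanSpace ℝ (Fin d))) : ℝ≥0∞ :=
  ⨅ γ ∈ couplings μ ν, ∫⁻ p, edist p.1 p.2 ∂γ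

section AuxDob
open Set

namespace Dob

variable {d : ℕ}

abbrev E (d : ℕ) := EuclideanSpace ℝ (Fin d)

section Klem

variable {L : ℝ} {K : E d × E d → E d}

lemma lipK1 (hK : ContDiff ℝ 1 K)
    (hK2a : ∀ z z' : E d, ‖fderiv ℝ (fun w => K (w, z')) z‖ ≤ L) :
    ∀ (a b z' : E d), ‖K (a, z') - K (b, z')‖ ≤ L * ‖a - b‖ := by
  intro a b z'
  have hdiff : ∀ x : E d, DifferentiableAt ℝ (fun w => K (w, z')) x := fun x =>
    ((hK.differentiable (by norm_num)) (x, z')).comp x (differentiableAt_fun_id.prodMk (differentiableAt_const _))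
  exact (convex_univ.norm_image_sub_le_of_norm_fderiv_le (fun x _ => hdiff x)
    (fun x _ => hK2a x z') (mem_univ b) (mem_univ a))

lemma lipK2 (hK : ContDiff ℝ 1 K)
    (hK2b : ∀ z z' : E d, ‖fderiv ℝ (fun w => K (z, w)) z'‖ ≤ L) :
    ∀ (z u v : E d), ‖K (z, u) - K (z, v)‖ ≤ L * ‖u - v‖ := by
  intro z u v
  have hdiff : ∀ x : E d, DifferentiableAt ℝ (fun w => K (z, w)) x := fun x =>
    ((hK.differentiable (by norm_num)) (z, x)).comp x ((differentiableAt_const _).prodMk differentiableAt_fun_id)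
  exact (convex_univ.norm_image_sub_le_of_norm_fderiv_le (fun x _ => hdiff x)
    (fun x _ => hK2b z x) (mem_univ v) (mem_univ u))

lemma K_self (hK1 : ∀ z z' : E d, K (z, z') = - K (z', z)) (z : E d) : K (z, z) = 0 := by
  have h := hK1 z z
  have : K (z, z) + K (z, z) = 0 := by nth_rewrite 1 [h]; simp
  have h2 : (2 : ℝ) • K (z, z) = 0 := by rw [two_smul]; exact this
  simpa using (smul_eq_zero.1 h2).resolve_left (by norm_num)

lemma K_bound (hL : 0 ≤ L) (hK : ContDiff ℝ 1 K)
    (hK1 : ∀ z z' : E d, K (z, z') = - K (z', z))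
    (hK2a : ∀ z z' : E d, ‖fderiv ℝ (fun w => K (w, z')) z‖ ≤ L) (a u : E d) :
    ‖K (a, u)‖ ≤ L * ‖a‖ + L * ‖u‖ := by
  have h := lipK1 hK hK2a a u u
  rw [K_self hK1, sub_zero] at h
  calc ‖K (a, u)‖ ≤ L * ‖a - u‖ := h
    _ ≤ L * (‖a‖ + ‖u‖) := mul_le_mul_of_nonneg_left (norm_sub_le a u) hL
    _ = L * ‖a‖ + L * ‖u‖ := by ring

lemma contK : Continuous K → ∀ a : E d, Continuous fun z' => K (a, z') := fun h a =>
  h.comp (continuous_const.prodMk continuous_id)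

/-- Lipschitz bound for the mean-field vector field, valid whether or not integrable. -/
lemma lipB (hL : 0 ≤ L) (hK : ContDiff ℝ 1 K)
    (hK2a : ∀ z z' : E d, ‖fderiv ℝ (fun w => K (w, z')) z‖ ≤ L)
    (ν : Measure (E d)) [IsProbabilityMeasure ν] (a b : E d) :
    ‖(∫ z', K (a, z') ∂ν) - ∫ z', K (b, z') ∂ν‖ ≤ L * ‖a - b‖ := by
  have hmeas : ∀ c : E d, AEStronglyMeasurable (fun z' => K (c, z')) ν := fun c =>
    (contK hK.continuous c).aestronglyMeasurable
  have hdiff_int : Integrable (fun z' => K (a, z') - K (b, z')) ν := by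
    refine Integrable.mono' (integrable_const (L * ‖a - b‖)) ((hmeas a).sub (hmeas b)) ?_
    exact Eventually.of_forall fun z' => lipK1 hK hK2a a b z'
  by_cases hint : Integrable (fun z' => K (a, z')) ν
  · have hint_b : Integrable (fun z' => K (b, z')) ν := by
      exact (hint.sub hdiff_int).congr (Filter.Eventually.of_forall fun z' => by simp)
    rw [← integral_sub hint hint_b]
    refine le_trans (norm_integral_le_of_norm_le (integrable_const (L * ‖a - b‖))
      (Eventually.of_forall fun z' => lipK1 hK hK2a a b z')) ?_
    simp
  · have hint_b : ¬ Integrable (fun z' => K (b, z')) ν := by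
      intro h
      refine hint ((h.add hdiff_int).congr (Eventually.of_forall fun z' => by simp))
    rw [integral_undef hint, integral_undef hint_b]
    simpa using mul_nonneg hL (norm_nonneg (a - b))

end Klem

section Flow

variable {L : ℝ} {K : E d × E d → E d} {μ : Measure (E d)} {Z : ℝ → E d → E d}

lemma contZ (hZ : Continuous (Function.uncurry Z)) (t : ℝ) : Continuous (Z t) :=
  hZ.comp (continuous_const.prodMk continuous_id)

lemma contZ' (hZ : Continuous (Function.uncurry Z)) (ζ : E d) : Continuous fun s => Z s ζ :=
  hZ.comp (continuous_id.prodMk continuous_const)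

lemma probMap [IsProbabilityMeasure μ] (hZ : Continuous (Function.uncurry Z)) (t : ℝ) :
    IsProbabilityMeasure (Measure.map (Z t) μ) :=
  Measure.isProbabilityMeasure_map (contZ hZ t).aemeasurable

lemma flow_contract (hL : 0 ≤ L) (hK : ContDiff ℝ 1 K)
    (hK2a : ∀ z z' : E d, ‖fderiv ℝ (fun w => K (w, z')) z‖ ≤ L)
    [IsProbabilityMeasure μ]
    (hZc : Continuous (Function.uncurry Z)) (hZ0 : ∀ ζ, Z 0 ζ = ζ)
    (hode : ∀ ζ t, HasDerivAt (fun s => Z s ζ)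
      (∫ z', K (Z t ζ, z') ∂(Measure.map (Z t) μ)) t)
    (ζ ζ' : E d) {t : ℝ} (ht : 0 ≤ t) :
    ‖Z t ζ - Z t ζ'‖ ≤ Real.exp (L * t) * ‖ζ - ζ'‖ := by
  have key := norm_le_gronwallBound_of_norm_deriv_right_le
    (f := fun s => Z s ζ - Z s ζ')
    (f' := fun s => (∫ z', K (Z s ζ, z') ∂(Measure.map (Z s) μ)) -
      ∫ z', K (Z s ζ', z') ∂(Measure.map (Z s) μ))
    (δ := ‖ζ - ζ'‖) (K := L) (ε := 0) (a := 0) (b := t)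
    (((contZ' hZc ζ).sub (contZ' hZc ζ')).continuousOn)
    (fun s _ => ((hode ζ s).sub (hode ζ' s)).hasDerivWithinAt)
    (by simp [hZ0])
    (fun s _ => by
      haveI := probMap (μ := μ) hZc s
      simpa using lipB hL hK hK2a (Measure.map (Z s) μ) (Z s ζ) (Z s ζ'))
  have h2 := key t ⟨ht, le_rfl⟩
  rwa [sub_zero, gronwallBound_ε0, mul_comm] at h2

lemma integrable_id_of_mom (hmom : ∫⁻ z, (‖z‖₊ : ℝ≥0∞) ∂μ ≠ ⊤) :
    Integrable (fun z : E d => z) μ :=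
  ⟨aestronglyMeasurable_id, lt_top_iff_ne_top.2 hmom⟩

lemma moment (hL : 0 ≤ L) (hK : ContDiff ℝ 1 K)
    (hK2a : ∀ z z' : E d, ‖fderiv ℝ (fun w => K (w, z')) z‖ ≤ L)
    [IsProbabilityMeasure μ] (hmom : ∫⁻ z, (‖z‖₊ : ℝ≥0∞) ∂μ ≠ ⊤)
    (hZc : Continuous (Function.uncurry Z)) (hZ0 : ∀ ζ, Z 0 ζ = ζ)
    (hode : ∀ ζ t, HasDerivAt (fun s => Z s ζ)
      (∫ z', K (Z t ζ, z') ∂(Measure.map (Z t) μ)) t)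
    {t : ℝ} (ht : 0 ≤ t) :
    Integrable (Z t) μ := by
  have hid := integrable_id_of_mom (μ := μ) hmom
  refine Integrable.mono' ((hid.norm.const_mul (Real.exp (L * t))).add
    (integrable_const ‖Z t 0‖)) (contZ hZc t).aestronglyMeasurable
    (Filter.Eventually.of_forall fun ζ => ?_)
  have h := flow_contract hL hK hK2a hZc hZ0 hode ζ 0 ht
  have h2 := norm_sub_norm_le (Z t ζ) (Z t 0)
  show ‖Z t ζ‖ ≤ Real.exp (L * t) * ‖ζ‖ + ‖Z t 0‖
  calc ‖Z t ζ‖ ≤ ‖Z t ζ - Z t 0‖ + ‖Z t 0‖ := by linarith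
    _ ≤ Real.exp (L * t) * ‖ζ - 0‖ + ‖Z t 0‖ := by linarith
    _ = Real.exp (L * t) * ‖ζ‖ + ‖Z t 0‖ := by rw [sub_zero]

lemma integrableK (hL : 0 ≤ L) (hK : ContDiff ℝ 1 K)
    (hK1 : ∀ z z' : E d, K (z, z') = - K (z', z))
    (hK2a : ∀ z z' : E d, ‖fderiv ℝ (fun w => K (w, z')) z‖ ≤ L)
    [IsProbabilityMeasure μ] (hmom : ∫⁻ z, (‖z‖₊ : ℝ≥0∞) ∂μ ≠ ⊤)
    (hZc : Continuous (Function.uncurry Z)) (hZ0 : ∀ ζ, Z 0 ζ = ζ)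
    (hode : ∀ ζ t, HasDerivAt (fun s => Z s ζ)
      (∫ z', K (Z t ζ, z') ∂(Measure.map (Z t) μ)) t)
    {t : ℝ} (ht : 0 ≤ t) (a : E d) :
    Integrable (fun ζ => K (a, Z t ζ)) μ := by
  refine Integrable.mono' ((integrable_const (L * ‖a‖)).add
    (((moment hL hK hK2a hmom hZc hZ0 hode ht).norm.const_mul L)))
    ((contK hK.continuous a).comp_aestronglyMeasurable (contZ hZc t).aestronglyMeasurable)
    (Filter.Eventually.of_forall fun ζ => ?_)
  exact K_bound hL hK hK1 hK2a a (Z t ζ)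

lemma integrableK_map (hL : 0 ≤ L) (hK : ContDiff ℝ 1 K)
    (hK1 : ∀ z z' : E d, K (z, z') = - K (z', z))
    (hK2a : ∀ z z' : E d, ‖fderiv ℝ (fun w => K (w, z')) z‖ ≤ L)
    [IsProbabilityMeasure μ] (hmom : ∫⁻ z, (‖z‖₊ : ℝ≥0∞) ∂μ ≠ ⊤)
    (hZc : Continuous (Function.uncurry Z)) (hZ0 : ∀ ζ, Z 0 ζ = ζ)
    (hode : ∀ ζ t, HasDerivAt (fun s => Z s ζ)
      (∫ z', K (Z t ζ, z') ∂(Measure.map (Z t) μ)) t)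
    {t : ℝ} (ht : 0 ≤ t) (a : E d) :
    Integrable (fun z' => K (a, z')) (Measure.map (Z t) μ) := by
  rw [integrable_map_measure (contK hK.continuous a).aestronglyMeasurable
    (contZ hZc t).aemeasurable]
  exact integrableK hL hK hK1 hK2a hmom hZc hZ0 hode ht a

end Flow


lemma integrable_comp_fst {X : Type*} [NormedAddCommGroup X] {g : E d → X}
    {γ : Measure (E d × E d)} {μ : Measure (E d)} (hγ : γ.map Prod.fst = μ)
    (hg : Integrable g μ) : Integrable (fun p : E d × E d => g p.1) γ := by
  subst hγ
  exact (integrable_map_measure hg.aestronglyMeasurable measurable_fst.aemeasurable).1 hg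

lemma integrable_comp_snd {X : Type*} [NormedAddCommGroup X] {g : E d → X}
    {γ : Measure (E d × E d)} {μ : Measure (E d)} (hγ : γ.map Prod.snd = μ)
    (hg : Integrable g μ) : Integrable (fun p : E d × E d => g p.2) γ := by
  subst hγ
  exact (integrable_map_measure hg.aestronglyMeasurable measurable_snd.aemeasurable).1 hg

lemma prob_of_coupling {γ : Measure (E d × E d)} {μ : Measure (E d)}
    [IsProbabilityMeasure μ] (hγ : γ.map Prod.fst = μ) : IsProbabilityMeasure γ := by
  constructor
  have h := Measure.map_apply (measurable_fst (α := E d) (β := E d)) (MeasurableSet.univ (α := E d))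
    (μ := γ)
  rw [hγ] at h
  simpa using h.symm

section Key

variable {L : ℝ} {K : E d × E d → E d} {μ₁ μ₂ : Measure (E d)} {Z₁ Z₂ : ℝ → E d → E d}

lemma key (hL : 0 ≤ L) (hK : ContDiff ℝ 1 K)
    (hK1 : ∀ z z' : E d, K (z, z') = - K (z', z))
    (hK2a : ∀ z z' : E d, ‖fderiv ℝ (fun w => K (w, z')) z‖ ≤ L)
    (hK2b : ∀ z z' : E d, ‖fderiv ℝ (fun w => K (z, w)) z'‖ ≤ L)
    [IsProbabilityMeasure μ₁] [IsProbabilityMeasure μ₂]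
    (hmom₁ : ∫⁻ z, (‖z‖₊ : ℝ≥0∞) ∂μ₁ ≠ ⊤) (hmom₂ : ∫⁻ z, (‖z‖₊ : ℝ≥0∞) ∂μ₂ ≠ ⊤)
    (hZ₁c : Continuous (Function.uncurry Z₁)) (hZ₂c : Continuous (Function.uncurry Z₂))
    (hZ₁0 : ∀ ζ, Z₁ 0 ζ = ζ) (hZ₂0 : ∀ ζ, Z₂ 0 ζ = ζ)
    (hode₁ : ∀ ζ t, HasDerivAt (fun s => Z₁ s ζ)
      (∫ z', K (Z₁ t ζ, z') ∂(Measure.map (Z₁ t) μ₁)) t)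
    (hode₂ : ∀ ζ t, HasDerivAt (fun s => Z₂ s ζ)
      (∫ z', K (Z₂ t ζ, z') ∂(Measure.map (Z₂ t) μ₂)) t)
    (γ : Measure (E d × E d)) (hγ1 : γ.map Prod.fst = μ₁) (hγ2 : γ.map Prod.snd = μ₂)
    {T : ℝ} (hT : 0 ≤ T) :
    ∫⁻ p, edist (Z₁ T p.1) (Z₂ T p.2) ∂γ ≤
      ENNReal.ofReal (Real.exp (2 * L * T)) * ∫⁻ p, edist p.1 p.2 ∂γ := by
  haveI : IsProbabilityMeasure γ := prob_of_coupling hγ1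
  have hid₁ : Integrable (fun z : E d => z) μ₁ := integrable_id_of_mom hmom₁
  have hid₂ : Integrable (fun z : E d => z) μ₂ := integrable_id_of_mom hmom₂
  -- moments of the flows
  have hmZ₁ : ∀ {s : ℝ}, 0 ≤ s → Integrable (Z₁ s) μ₁ :=
    fun hs => moment hL hK hK2a hmom₁ hZ₁c hZ₁0 hode₁ hs
  have hmZ₂ : ∀ {s : ℝ}, 0 ≤ s → Integrable (Z₂ s) μ₂ :=
    fun hs => moment hL hK hK2a hmom₂ hZ₂c hZ₂0 hode₂ hs
  -- the integrand of F
  have hw_int : ∀ {s : ℝ}, 0 ≤ s → Integrable (fun p : E d × E d => Z₁ s p.1 - Z₂ s p.2) γ :=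
    fun hs => (integrable_comp_fst hγ1 (hmZ₁ hs)).sub (integrable_comp_snd hγ2 (hmZ₂ hs))
  set F : ℝ → ℝ := fun s => ∫ p, ‖Z₁ s p.1 - Z₂ s p.2‖ ∂γ with hFdef
  have hFnonneg : ∀ s, 0 ≤ F s := fun s => integral_nonneg fun p => norm_nonneg _
  -- bounds for Z at the origin on [0,T]
  obtain ⟨C₁, hC₁⟩ : ∃ C₁, ∀ s ∈ Icc (0:ℝ) T, ‖Z₁ s 0‖ ≤ C₁ :=
    isCompact_Icc.exists_bound_of_continuousOn (contZ' hZ₁c 0).continuousOn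
  obtain ⟨C₂, hC₂⟩ : ∃ C₂, ∀ s ∈ Icc (0:ℝ) T, ‖Z₂ s 0‖ ≤ C₂ :=
    isCompact_Icc.exists_bound_of_continuousOn (contZ' hZ₂c 0).continuousOn
  -- linear growth of the flows on [0, T]
  have hgrow₁ : ∀ s ∈ Icc (0:ℝ) T, ∀ ζ, ‖Z₁ s ζ‖ ≤ Real.exp (L * T) * ‖ζ‖ + C₁ := by
    intro s hs ζ
    have h1 := flow_contract hL hK hK2a hZ₁c hZ₁0 hode₁ ζ 0 hs.1
    have h2 := hC₁ s hs
    have h3 := norm_sub_norm_le (Z₁ s ζ) (Z₁ s 0)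
    have hexp : Real.exp (L * s) ≤ Real.exp (L * T) :=
      Real.exp_le_exp.2 (mul_le_mul_of_nonneg_left hs.2 hL)
    have h4 : Real.exp (L * s) * ‖ζ - 0‖ ≤ Real.exp (L * T) * ‖ζ‖ := by
      rw [sub_zero]; exact mul_le_mul_of_nonneg_right hexp (norm_nonneg _)
    linarith
  have hgrow₂ : ∀ s ∈ Icc (0:ℝ) T, ∀ ζ, ‖Z₂ s ζ‖ ≤ Real.exp (L * T) * ‖ζ‖ + C₂ := by
    intro s hs ζ
    have h1 := flow_contract hL hK hK2a hZ₂c hZ₂0 hode₂ ζ 0 hs.1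
    have h2 := hC₂ s hs
    have h3 := norm_sub_norm_le (Z₂ s ζ) (Z₂ s 0)
    have hexp : Real.exp (L * s) ≤ Real.exp (L * T) :=
      Real.exp_le_exp.2 (mul_le_mul_of_nonneg_left hs.2 hL)
    have h4 : Real.exp (L * s) * ‖ζ - 0‖ ≤ Real.exp (L * T) * ‖ζ‖ := by
      rw [sub_zero]; exact mul_le_mul_of_nonneg_right hexp (norm_nonneg _)
    linarith
  -- master dominating function
  set G : E d × E d → ℝ := fun p => Real.exp (L * T) * (‖p.1‖ + ‖p.2‖) + (C₁ + C₂) with hGdef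
  have hGint : Integrable G γ := by
    refine Integrable.add (Integrable.const_mul ?_ _) (integrable_const _)
    exact ((integrable_comp_fst hγ1 hid₁).norm).add ((integrable_comp_snd hγ2 hid₂).norm)
  have hmaster : ∀ s ∈ Icc (0:ℝ) T, ∀ p : E d × E d, ‖Z₁ s p.1 - Z₂ s p.2‖ ≤ G p := by
    intro s hs p
    have h1 := hgrow₁ s hs p.1
    have h2 := hgrow₂ s hs p.2
    have h3 := norm_sub_le (Z₁ s p.1) (Z₂ s p.2)
    simp only [hGdef]
    nlinarith [norm_nonneg p.1, norm_nonneg p.2]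
  -- continuity of F on [0, T]
  have hFcont : ContinuousOn F (Icc 0 T) := by
    refine continuousOn_of_dominated (fun s _ => ?_) (fun s hs => ?_) hGint ?_
    · exact ((contZ hZ₁c s).comp continuous_fst |>.sub
        ((contZ hZ₂c s).comp continuous_snd)).norm.aestronglyMeasurable
    · exact Eventually.of_forall fun p => by
        simpa using hmaster s hs p
    · refine Eventually.of_forall fun p => Continuous.continuousOn ?_
      exact ((contZ' hZ₁c p.1).sub (contZ' hZ₂c p.2)).norm
  -- the mean-field vector fields
  set B₁ : ℝ → E d → E d := fun s a => ∫ z', K (a, z') ∂(Measure.map (Z₁ s) μ₁) with hB₁def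
  set B₂ : ℝ → E d → E d := fun s a => ∫ z', K (a, z') ∂(Measure.map (Z₂ s) μ₂) with hB₂def
  have hBrw₁ : ∀ (s : ℝ) (a : E d), B₁ s a = ∫ ζ, K (a, Z₁ s ζ) ∂μ₁ := fun s a =>
    integral_map (contZ hZ₁c s).aemeasurable (contK hK.continuous a).aestronglyMeasurable
  have hBrw₂ : ∀ (s : ℝ) (a : E d), B₂ s a = ∫ ζ, K (a, Z₂ s ζ) ∂μ₂ := fun s a =>
    integral_map (contZ hZ₂c s).aemeasurable (contK hK.continuous a).aestronglyMeasurable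
  have hBγ₁ : ∀ (s : ℝ) (a : E d), B₁ s a = ∫ p, K (a, Z₁ s p.1) ∂γ := by
    intro s a
    have hc : Continuous fun ζ : E d => K (a, Z₁ s ζ) :=
      (contK hK.continuous a).comp (contZ hZ₁c s)
    rw [hBrw₁ s a, ← hγ1, integral_map (f := fun ζ : E d => K (a, Z₁ s ζ))
      measurable_fst.aemeasurable hc.aestronglyMeasurable]
  have hBγ₂ : ∀ (s : ℝ) (a : E d), B₂ s a = ∫ p, K (a, Z₂ s p.2) ∂γ := by
    intro s a
    have hc : Continuous fun ζ : E d => K (a, Z₂ s ζ) :=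
      (contK hK.continuous a).comp (contZ hZ₂c s)
    rw [hBrw₂ s a, ← hγ2, integral_map (f := fun ζ : E d => K (a, Z₂ s ζ))
      measurable_snd.aemeasurable hc.aestronglyMeasurable]
  have hKi₁ : ∀ {s : ℝ}, 0 ≤ s → ∀ a : E d,
      Integrable (fun p : E d × E d => K (a, Z₁ s p.1)) γ :=
    fun hs a => integrable_comp_fst hγ1 (integrableK hL hK hK1 hK2a hmom₁ hZ₁c hZ₁0 hode₁ hs a)
  have hKi₂ : ∀ {s : ℝ}, 0 ≤ s → ∀ a : E d,
      Integrable (fun p : E d × E d => K (a, Z₂ s p.2)) γ :=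
    fun hs a => integrable_comp_snd hγ2 (integrableK hL hK hK1 hK2a hmom₂ hZ₂c hZ₂0 hode₂ hs a)
  -- the key估 difference bound for the vector fields
  have hdiffB : ∀ s ∈ Icc (0:ℝ) T, ∀ a b : E d,
      ‖B₁ s a - B₂ s b‖ ≤ L * ‖a - b‖ + L * F s := by
    intro s hs a b
    rw [hBγ₁ s a, hBγ₂ s b, ← integral_sub (hKi₁ hs.1 a) (hKi₂ hs.1 b)]
    have hbd : ∀ p : E d × E d, ‖K (a, Z₁ s p.1) - K (b, Z₂ s p.2)‖ ≤
        L * ‖a - b‖ + L * ‖Z₁ s p.1 - Z₂ s p.2‖ := by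
      intro p
      have h1 := lipK1 hK hK2a a b (Z₁ s p.1)
      have h2 := lipK2 hK hK2b b (Z₁ s p.1) (Z₂ s p.2)
      have h3 : dist (K (a, Z₁ s p.1)) (K (b, Z₂ s p.2)) ≤
          dist (K (a, Z₁ s p.1)) (K (b, Z₁ s p.1)) + dist (K (b, Z₁ s p.1)) (K (b, Z₂ s p.2)) :=
        dist_triangle _ _ _
      simp only [dist_eq_norm] at h3
      linarith
    have hrhs : Integrable (fun p : E d × E d => L * ‖a - b‖ + L * ‖Z₁ s p.1 - Z₂ s p.2‖) γ :=
      (integrable_const _).add (((hw_int hs.1).norm).const_mul L)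
    refine le_trans (norm_integral_le_of_norm_le hrhs (Eventually.of_forall hbd)) ?_
    rw [integral_add (integrable_const _) (((hw_int hs.1).norm).const_mul L), integral_const,
      probReal_univ, integral_const_mul]
    simp [hFdef]
  -- continuity of s ↦ B₁ s (Z₁ s x) on [0,T]
  have hcontB₁ : ∀ x : E d, ContinuousOn (fun s => B₁ s (Z₁ s x)) (Icc 0 T) := by
    intro x
    have hmain : ContinuousOn (fun s => ∫ ζ, K (Z₁ s x, Z₁ s ζ) ∂μ₁) (Icc 0 T) := by
      refine continuousOn_of_dominated
        (bound := fun ζ => L * (Real.exp (L * T) * ‖x‖ + C₁) + L * (Real.exp (L * T) * ‖ζ‖ + C₁))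
        (fun s _ => ?_) (fun s hs => Eventually.of_forall fun ζ => ?_) ?_
        (Eventually.of_forall fun ζ => ?_)
      · exact (hK.continuous.comp
          (continuous_const.prodMk (contZ hZ₁c s))).aestronglyMeasurable
      · have hb := K_bound hL hK hK1 hK2a (Z₁ s x) (Z₁ s ζ)
        have g1 := hgrow₁ s hs x
        have g2 := hgrow₁ s hs ζ
        have m1 : L * ‖Z₁ s x‖ ≤ L * (Real.exp (L * T) * ‖x‖ + C₁) :=
          mul_le_mul_of_nonneg_left g1 hL
        have m2 : L * ‖Z₁ s ζ‖ ≤ L * (Real.exp (L * T) * ‖ζ‖ + C₁) :=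
          mul_le_mul_of_nonneg_left g2 hL
        show ‖K (Z₁ s x, Z₁ s ζ)‖ ≤
          L * (Real.exp (L * T) * ‖x‖ + C₁) + L * (Real.exp (L * T) * ‖ζ‖ + C₁)
        linarith
      · exact (integrable_const _).add
          (((hid₁.norm.const_mul (Real.exp (L * T))).add (integrable_const C₁)).const_mul L)
      · exact (hK.continuous.comp
          ((contZ' hZ₁c x).prodMk (contZ' hZ₁c ζ))).continuousOn
    exact hmain.congr fun s _ => hBrw₁ s (Z₁ s x)
  have hcontB₂ : ∀ x : E d, ContinuousOn (fun s => B₂ s (Z₂ s x)) (Icc 0 T) := by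
    intro x
    have hmain : ContinuousOn (fun s => ∫ ζ, K (Z₂ s x, Z₂ s ζ) ∂μ₂) (Icc 0 T) := by
      refine continuousOn_of_dominated
        (bound := fun ζ => L * (Real.exp (L * T) * ‖x‖ + C₂) + L * (Real.exp (L * T) * ‖ζ‖ + C₂))
        (fun s _ => ?_) (fun s hs => Eventually.of_forall fun ζ => ?_) ?_
        (Eventually.of_forall fun ζ => ?_)
      · exact (hK.continuous.comp
          (continuous_const.prodMk (contZ hZ₂c s))).aestronglyMeasurable
      · have hb := K_bound hL hK hK1 hK2a (Z₂ s x) (Z₂ s ζ)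
        have g1 := hgrow₂ s hs x
        have g2 := hgrow₂ s hs ζ
        have m1 : L * ‖Z₂ s x‖ ≤ L * (Real.exp (L * T) * ‖x‖ + C₂) :=
          mul_le_mul_of_nonneg_left g1 hL
        have m2 : L * ‖Z₂ s ζ‖ ≤ L * (Real.exp (L * T) * ‖ζ‖ + C₂) :=
          mul_le_mul_of_nonneg_left g2 hL
        show ‖K (Z₂ s x, Z₂ s ζ)‖ ≤
          L * (Real.exp (L * T) * ‖x‖ + C₂) + L * (Real.exp (L * T) * ‖ζ‖ + C₂)
        linarith
      · exact (integrable_const _).add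
          (((hid₂.norm.const_mul (Real.exp (L * T))).add (integrable_const C₂)).const_mul L)
      · exact (hK.continuous.comp
          ((contZ' hZ₂c x).prodMk (contZ' hZ₂c ζ))).continuousOn
    exact hmain.congr fun s _ => hBrw₂ s (Z₂ s x)
  -- pointwise integral inequality
  have hpt : ∀ p : E d × E d, ∀ t ∈ Icc (0:ℝ) T,
      ‖Z₁ t p.1 - Z₂ t p.2‖ ≤ ‖p.1 - p.2‖ +
        ∫ s in (0:ℝ)..t, (L * ‖Z₁ s p.1 - Z₂ s p.2‖ + L * F s) := by
    intro p t ht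
    have hIccsub : Icc (0:ℝ) t ⊆ Icc 0 T := Icc_subset_Icc le_rfl ht.2
    have huIcc : uIcc (0:ℝ) t ⊆ Icc 0 T := by rw [uIcc_of_le ht.1]; exact hIccsub
    have hvcont : ContinuousOn (fun s => B₁ s (Z₁ s p.1) - B₂ s (Z₂ s p.2)) (Icc 0 T) :=
      (hcontB₁ p.1).sub (hcontB₂ p.2)
    have hvint : IntervalIntegrable (fun s => B₁ s (Z₁ s p.1) - B₂ s (Z₂ s p.2)) volume 0 t :=
      (hvcont.mono huIcc).intervalIntegrable
    have hftc := intervalIntegral.integral_eq_sub_of_hasDerivAt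
      (f := fun s => Z₁ s p.1 - Z₂ s p.2)
      (f' := fun s => B₁ s (Z₁ s p.1) - B₂ s (Z₂ s p.2))
      (fun s _ => (hode₁ p.1 s).sub (hode₂ p.2 s)) hvint
    have h0 : Z₁ 0 p.1 - Z₂ 0 p.2 = p.1 - p.2 := by rw [hZ₁0, hZ₂0]
    have h1 : ‖Z₁ t p.1 - Z₂ t p.2‖ ≤ ‖p.1 - p.2‖ +
        ‖∫ s in (0:ℝ)..t, (B₁ s (Z₁ s p.1) - B₂ s (Z₂ s p.2))‖ := by
      have heq : Z₁ t p.1 - Z₂ t p.2 =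
          (p.1 - p.2) + ∫ s in (0:ℝ)..t, (B₁ s (Z₁ s p.1) - B₂ s (Z₂ s p.2)) := by
        rw [hftc]; simp only [hZ₁0, hZ₂0]; abel
      rw [heq]; exact norm_add_le _ _
    have h2 := intervalIntegral.norm_integral_le_integral_norm
      (f := fun s => B₁ s (Z₁ s p.1) - B₂ s (Z₂ s p.2)) (μ := volume) ht.1
    have hrhs_cont : ContinuousOn (fun s => L * ‖Z₁ s p.1 - Z₂ s p.2‖ + L * F s) (Icc 0 T) :=
      (continuousOn_const.mul ((contZ' hZ₁c p.1).sub (contZ' hZ₂c p.2)).norm.continuousOn).add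
        (continuousOn_const.mul hFcont)
    have h3 : (∫ s in (0:ℝ)..t, ‖B₁ s (Z₁ s p.1) - B₂ s (Z₂ s p.2)‖) ≤
        ∫ s in (0:ℝ)..t, (L * ‖Z₁ s p.1 - Z₂ s p.2‖ + L * F s) := by
      refine intervalIntegral.integral_mono_on ht.1
        ((hvcont.mono huIcc).norm.intervalIntegrable)
        ((hrhs_cont.mono huIcc).intervalIntegrable) (fun s hs => ?_)
      exact hdiffB s (hIccsub hs) (Z₁ s p.1) (Z₂ s p.2)
    linarith
  -- clamped version of F, continuous on all of ℝ
  set Fc : ℝ → ℝ := fun s => F (min T (max 0 s)) with hFcdef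
  have hclamp_mem : ∀ s : ℝ, min T (max 0 s) ∈ Icc (0:ℝ) T := fun s =>
    ⟨le_min hT (le_max_left 0 s), min_le_left _ _⟩
  have hFc_cont : Continuous Fc :=
    hFcont.comp_continuous (continuous_const.min (continuous_const.max continuous_id))
      hclamp_mem
  have hFc_eq : ∀ s ∈ Icc (0:ℝ) T, Fc s = F s := by
    intro s hs
    simp only [hFcdef, max_eq_right hs.1, min_eq_right hs.2]
  -- the integrated inequality
  have hkey : ∀ t ∈ Icc (0:ℝ) T, F t ≤ F 0 + ∫ s in (0:ℝ)..t, 2 * L * Fc s := by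
    intro t ht
    have hIccsub : Icc (0:ℝ) t ⊆ Icc 0 T := Icc_subset_Icc le_rfl ht.2
    have huIcc : uIcc (0:ℝ) t ⊆ Icc 0 T := by rw [uIcc_of_le ht.1]; exact hIccsub
    set ρ : Measure ℝ := volume.restrict (Ioc 0 t) with hρdef
    haveI : IsFiniteMeasure ρ := by
      constructor
      rw [hρdef, Measure.restrict_apply_univ]
      exact measure_Ioc_lt_top
    have hBii : IntervalIntegrable (fun s => L * F s) volume 0 t :=
      ((continuousOn_const.mul hFcont).mono huIcc).intervalIntegrable
    -- reformulated pointwise bound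
    have hpt' : ∀ p : E d × E d, ‖Z₁ t p.1 - Z₂ t p.2‖ ≤ ‖p.1 - p.2‖ +
        ((∫ s, L * ‖Z₁ s p.1 - Z₂ s p.2‖ ∂ρ) + ∫ s in (0:ℝ)..t, L * F s) := by
      intro p
      have h := hpt p t ht
      have hAii : IntervalIntegrable (fun s => L * ‖Z₁ s p.1 - Z₂ s p.2‖) volume 0 t :=
        (continuous_const.mul ((contZ' hZ₁c p.1).sub (contZ' hZ₂c p.2)).norm).intervalIntegrable
          0 t
      have hsplit : (∫ s in (0:ℝ)..t, (L * ‖Z₁ s p.1 - Z₂ s p.2‖ + L * F s))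
          = (∫ s in (0:ℝ)..t, L * ‖Z₁ s p.1 - Z₂ s p.2‖) + ∫ s in (0:ℝ)..t, L * F s :=
        intervalIntegral.integral_add hAii hBii
      have hAeq : (∫ s in (0:ℝ)..t, L * ‖Z₁ s p.1 - Z₂ s p.2‖)
          = ∫ s, L * ‖Z₁ s p.1 - Z₂ s p.2‖ ∂ρ := intervalIntegral.integral_of_le ht.1
      rw [hsplit, hAeq] at h
      exact h
    -- product-measure integrability for the swap
    have hprod_meas : AEStronglyMeasurable
        (fun q : (E d × E d) × ℝ => L * ‖Z₁ q.2 q.1.1 - Z₂ q.2 q.1.2‖) (γ.prod ρ) := by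
      have hc1 : Continuous fun q : (E d × E d) × ℝ => Z₁ q.2 q.1.1 :=
        hZ₁c.comp (continuous_snd.prodMk (continuous_fst.fst))
      have hc2 : Continuous fun q : (E d × E d) × ℝ => Z₂ q.2 q.1.2 :=
        hZ₂c.comp (continuous_snd.prodMk (continuous_fst.snd))
      exact (continuous_const.mul (hc1.sub hc2).norm).aestronglyMeasurable
    have hGcont : Continuous G := by
      refine Continuous.add (continuous_const.mul ?_) continuous_const
      exact continuous_fst.norm.add continuous_snd.norm
    have hdom : Integrable (fun q : (E d × E d) × ℝ => L * G q.1) (γ.prod ρ) := by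
      have h1 : Integrable (fun p => L * G p) γ := hGint.const_mul L
      refine (integrable_map_measure (continuous_const.mul hGcont).aestronglyMeasurable
        measurable_fst.aemeasurable).1 ?_
      rw [Measure.map_fst_prod]
      exact h1.smul_measure (measure_ne_top ρ univ)
    have hae : ∀ᵐ q ∂(γ.prod ρ),
        ‖L * ‖Z₁ q.2 q.1.1 - Z₂ q.2 q.1.2‖‖ ≤ L * G q.1 := by
      have hres : γ.prod ρ = (γ.prod volume).restrict (univ ×ˢ Ioc 0 t) := by
        rw [hρdef, ← Measure.prod_restrict, Measure.restrict_univ]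
      rw [hres]
      filter_upwards [ae_restrict_mem (MeasurableSet.univ.prod measurableSet_Ioc)] with q hq
      have hqs : q.2 ∈ Icc (0:ℝ) T := ⟨le_of_lt hq.2.1, hq.2.2.trans ht.2⟩
      have hm := hmaster q.2 hqs q.1
      rw [Real.norm_eq_abs, abs_of_nonneg (mul_nonneg hL (norm_nonneg _))]
      exact mul_le_mul_of_nonneg_left hm hL
    have hint_prod : Integrable
        (fun q : (E d × E d) × ℝ => L * ‖Z₁ q.2 q.1.1 - Z₂ q.2 q.1.2‖) (γ.prod ρ) :=
      Integrable.mono' hdom hprod_meas hae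
    have hA_int : Integrable (fun p : E d × E d => ∫ s, L * ‖Z₁ s p.1 - Z₂ s p.2‖ ∂ρ) γ :=
      hint_prod.integral_prod_left
    have hswap : (∫ p, (∫ s, L * ‖Z₁ s p.1 - Z₂ s p.2‖ ∂ρ) ∂γ)
        = ∫ s, (∫ p, L * ‖Z₁ s p.1 - Z₂ s p.2‖ ∂γ) ∂ρ :=
      integral_integral_swap (f := fun (p : E d × E d) (s : ℝ) =>
        L * ‖Z₁ s p.1 - Z₂ s p.2‖) hint_prod
    have hinner : ∀ s : ℝ, (∫ p, L * ‖Z₁ s p.1 - Z₂ s p.2‖ ∂γ) = L * F s := fun s =>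
      integral_const_mul L _
    have hnorm0 : Integrable (fun p : E d × E d => ‖p.1 - p.2‖) γ :=
      ((integrable_comp_fst hγ1 hid₁).sub (integrable_comp_snd hγ2 hid₂)).norm
    -- integrate the pointwise bound
    have h1 : F t ≤ ∫ p, (‖p.1 - p.2‖ +
        ((∫ s, L * ‖Z₁ s p.1 - Z₂ s p.2‖ ∂ρ) + ∫ s in (0:ℝ)..t, L * F s)) ∂γ := by
      refine integral_mono (hw_int ht.1).norm ?_ hpt'
      exact hnorm0.add (hA_int.add (integrable_const _))
    have h2 : (∫ p, (‖p.1 - p.2‖ +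
        ((∫ s, L * ‖Z₁ s p.1 - Z₂ s p.2‖ ∂ρ) + ∫ s in (0:ℝ)..t, L * F s)) ∂γ)
        = (∫ p, ‖p.1 - p.2‖ ∂γ) +
          ((∫ s in (0:ℝ)..t, L * F s) + ∫ s in (0:ℝ)..t, L * F s) := by
      have e1 : (∫ p, (‖p.1 - p.2‖ +
          ((∫ s, L * ‖Z₁ s p.1 - Z₂ s p.2‖ ∂ρ) + ∫ s in (0:ℝ)..t, L * F s)) ∂γ)
          = (∫ p, ‖p.1 - p.2‖ ∂γ) + ∫ p, ((∫ s, L * ‖Z₁ s p.1 - Z₂ s p.2‖ ∂ρ) +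
            ∫ s in (0:ℝ)..t, L * F s) ∂γ :=
        integral_add hnorm0 (hA_int.add (integrable_const _))
      have e2 : (∫ p, ((∫ s, L * ‖Z₁ s p.1 - Z₂ s p.2‖ ∂ρ) +
            ∫ s in (0:ℝ)..t, L * F s) ∂γ)
          = (∫ p, (∫ s, L * ‖Z₁ s p.1 - Z₂ s p.2‖ ∂ρ) ∂γ) +
            ∫ p, (∫ s in (0:ℝ)..t, L * F s) ∂γ :=
        integral_add hA_int (integrable_const _)
      have e3 : (∫ _p, (∫ s in (0:ℝ)..t, L * F s) ∂γ) = ∫ s in (0:ℝ)..t, L * F s := by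
        rw [integral_const, probReal_univ]; simp
      have e4 : (∫ s, (∫ p, L * ‖Z₁ s p.1 - Z₂ s p.2‖ ∂γ) ∂ρ) = ∫ s, L * F s ∂ρ :=
        integral_congr_ae (Eventually.of_forall hinner)
      rw [e1, e2, e3, hswap, e4, ← intervalIntegral.integral_of_le ht.1]
    have hF0 : (∫ p, ‖p.1 - p.2‖ ∂γ) = F 0 := by
      simp only [hFdef, hZ₁0, hZ₂0]
    have h3 : ((∫ s in (0:ℝ)..t, L * F s) + ∫ s in (0:ℝ)..t, L * F s)
        = ∫ s in (0:ℝ)..t, 2 * L * Fc s := by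
      rw [← intervalIntegral.integral_add hBii hBii]
      refine intervalIntegral.integral_congr fun s hs => ?_
      rw [hFc_eq s (huIcc hs)]; ring
    calc F t ≤ _ := h1
      _ = _ := h2
      _ = F 0 + ∫ s in (0:ℝ)..t, 2 * L * Fc s := by rw [hF0, h3]
  -- Gronwall
  set φ : ℝ → ℝ := fun r => F 0 + ∫ s in (0:ℝ)..r, 2 * L * Fc s with hφdef
  have hφderiv : ∀ r : ℝ, HasDerivAt φ (2 * L * Fc r) r := by
    intro r
    have hc : Continuous fun s => 2 * L * Fc s := continuous_const.mul hFc_cont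
    exact (intervalIntegral.integral_hasDerivAt_right (hc.intervalIntegrable _ _)
      (hc.stronglyMeasurable.stronglyMeasurableAtFilter) hc.continuousAt).const_add (F 0)
  have hgron := norm_le_gronwallBound_of_norm_deriv_right_le (f := φ)
    (f' := fun r => 2 * L * Fc r) (δ := F 0) (K := 2 * L) (ε := 0) (a := 0) (b := T)
    (fun r _ => (hφderiv r).continuousAt.continuousWithinAt)
    (fun r _ => (hφderiv r).hasDerivWithinAt)
    (by
      have : φ 0 = F 0 := by simp [hφdef]
      rw [this, Real.norm_eq_abs, abs_of_nonneg (hFnonneg 0)])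
    (fun r hr => by
      have hrIcc : r ∈ Icc (0:ℝ) T := ⟨hr.1, hr.2.le⟩
      have h1 : Fc r = F r := hFc_eq r hrIcc
      have h2 : F r ≤ φ r := hkey r hrIcc
      have hφnn : 0 ≤ φ r := le_trans (hFnonneg r) h2
      show ‖2 * L * Fc r‖ ≤ 2 * L * ‖φ r‖ + 0
      rw [Real.norm_eq_abs, Real.norm_eq_abs, abs_of_nonneg hφnn,
        abs_of_nonneg (by rw [h1]; positivity), h1, add_zero]
      have := mul_le_mul_of_nonneg_left h2 (by positivity : (0:ℝ) ≤ 2 * L)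
      linarith)
  have hφT := hgron T ⟨hT, le_rfl⟩
  rw [sub_zero, gronwallBound_ε0, Real.norm_eq_abs] at hφT
  have hFT : F T ≤ Real.exp (2 * L * T) * F 0 := by
    have h2 : F T ≤ φ T := hkey T ⟨hT, le_rfl⟩
    have h3 : φ T ≤ |φ T| := le_abs_self _
    calc F T ≤ |φ T| := le_trans h2 h3
      _ ≤ F 0 * Real.exp (2 * L * T) := hφT
      _ = Real.exp (2 * L * T) * F 0 := mul_comm _ _
  -- convert to lintegrals
  have hedistT : (∫⁻ p, edist (Z₁ T p.1) (Z₂ T p.2) ∂γ) = ENNReal.ofReal (F T) := by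
    have h := ofReal_integral_eq_lintegral_ofReal (hw_int hT).norm
      (Eventually.of_forall fun p => norm_nonneg _)
    rw [show F T = ∫ p, ‖Z₁ T p.1 - Z₂ T p.2‖ ∂γ from rfl, h]
    simp only [edist_eq_enorm_sub, ofReal_norm]
  have hedist0 : (∫⁻ p, edist p.1 p.2 ∂γ) = ENNReal.ofReal (F 0) := by
    have hw0 : Integrable (fun p : E d × E d => p.1 - p.2) γ :=
      (integrable_comp_fst hγ1 hid₁).sub (integrable_comp_snd hγ2 hid₂)
    have h := ofReal_integral_eq_lintegral_ofReal hw0.norm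
      (Eventually.of_forall fun p => norm_nonneg _)
    have hF0 : F 0 = ∫ p, ‖p.1 - p.2‖ ∂γ := by
      show (∫ p, ‖Z₁ 0 p.1 - Z₂ 0 p.2‖ ∂γ) = _
      simp only [hZ₁0, hZ₂0]
    rw [hF0, h]
    simp only [edist_eq_enorm_sub, ofReal_norm]
  rw [hedistT, hedist0, ← ENNReal.ofReal_mul (Real.exp_nonneg _)]
  exact ENNReal.ofReal_le_ofReal hFT

end Key

end Dob

namespace Dob

section Main

variable {d : ℕ} {L : ℝ} {K : E d × E d → E d} {μ₁ μ₂ : Measure (E d)} {Z₁ Z₂ : ℝ → E d → E d}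

lemma main_nonneg (hL : 0 ≤ L) (hK : ContDiff ℝ 1 K)
    (hK1 : ∀ z z' : E d, K (z, z') = - K (z', z))
    (hK2a : ∀ z z' : E d, ‖fderiv ℝ (fun w => K (w, z')) z‖ ≤ L)
    (hK2b : ∀ z z' : E d, ‖fderiv ℝ (fun w => K (z, w)) z'‖ ≤ L)
    [IsProbabilityMeasure μ₁] [IsProbabilityMeasure μ₂]
    (hmom₁ : ∫⁻ z, (‖z‖₊ : ℝ≥0∞) ∂μ₁ ≠ ⊤) (hmom₂ : ∫⁻ z, (‖z‖₊ : ℝ≥0∞) ∂μ₂ ≠ ⊤)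
    (hZ₁c : Continuous (Function.uncurry Z₁)) (hZ₂c : Continuous (Function.uncurry Z₂))
    (hZ₁0 : ∀ ζ, Z₁ 0 ζ = ζ) (hZ₂0 : ∀ ζ, Z₂ 0 ζ = ζ)
    (hode₁ : ∀ ζ t, HasDerivAt (fun s => Z₁ s ζ)
      (∫ z', K (Z₁ t ζ, z') ∂(Measure.map (Z₁ t) μ₁)) t)
    (hode₂ : ∀ ζ t, HasDerivAt (fun s => Z₂ s ζ)
      (∫ z', K (Z₂ t ζ, z') ∂(Measure.map (Z₂ t) μ₂)) t)
    {t : ℝ} (ht : 0 ≤ t) :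
    distMK1 (Measure.map (Z₁ t) μ₁) (Measure.map (Z₂ t) μ₂) ≤
      ENNReal.ofReal (Real.exp (2 * L * t)) * distMK1 μ₁ μ₂ := by
  set c := ENNReal.ofReal (Real.exp (2 * L * t)) with hcdef
  have hc0 : c ≠ 0 := (ENNReal.ofReal_pos.2 (Real.exp_pos _)).ne'
  have hctop : c ≠ ⊤ := ENNReal.ofReal_ne_top
  have hstep : ∀ γ ∈ couplings μ₁ μ₂,
      distMK1 (Measure.map (Z₁ t) μ₁) (Measure.map (Z₂ t) μ₂) ≤
        c * ∫⁻ p, edist p.1 p.2 ∂γ := by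
    intro γ hγ
    obtain ⟨hγ1, hγ2⟩ := hγ
    have hmeas₁ : Measurable (Z₁ t) := (contZ hZ₁c t).measurable
    have hmeas₂ : Measurable (Z₂ t) := (contZ hZ₂c t).measurable
    have hmeasP : Measurable (Prod.map (Z₁ t) (Z₂ t)) := hmeas₁.prodMap hmeas₂
    have hmemb : γ.map (Prod.map (Z₁ t) (Z₂ t)) ∈
        couplings (Measure.map (Z₁ t) μ₁) (Measure.map (Z₂ t) μ₂) := by
      constructor
      · rw [Measure.map_map measurable_fst hmeasP,
          show (Prod.fst ∘ Prod.map (Z₁ t) (Z₂ t)) = Z₁ t ∘ Prod.fst from rfl,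
          ← Measure.map_map hmeas₁ measurable_fst, hγ1]
      · rw [Measure.map_map measurable_snd hmeasP,
          show (Prod.snd ∘ Prod.map (Z₁ t) (Z₂ t)) = Z₂ t ∘ Prod.snd from rfl,
          ← Measure.map_map hmeas₂ measurable_snd, hγ2]
    have h1 : distMK1 (Measure.map (Z₁ t) μ₁) (Measure.map (Z₂ t) μ₂) ≤
        ∫⁻ p, edist p.1 p.2 ∂(γ.map (Prod.map (Z₁ t) (Z₂ t))) := iInf₂_le _ hmemb
    have h2 : (∫⁻ p, edist p.1 p.2 ∂(γ.map (Prod.map (Z₁ t) (Z₂ t))))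
        = ∫⁻ p, edist (Z₁ t p.1) (Z₂ t p.2) ∂γ := by
      rw [lintegral_map (continuous_fst.edist continuous_snd).measurable hmeasP]
      rfl
    refine h1.trans (le_trans (le_of_eq h2) ?_)
    exact key hL hK hK1 hK2a hK2b hmom₁ hmom₂ hZ₁c hZ₂c hZ₁0 hZ₂0 hode₁ hode₂ γ hγ1 hγ2 ht
  calc distMK1 (Measure.map (Z₁ t) μ₁) (Measure.map (Z₂ t) μ₂)
      ≤ ⨅ γ ∈ couplings μ₁ μ₂, c * ∫⁻ p, edist p.1 p.2 ∂γ := le_iInf₂ hstep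
    _ = c * distMK1 μ₁ μ₂ := by
        rw [distMK1, ENNReal.mul_iInf_of_ne hc0 hctop]
        exact iInf_congr fun γ => (ENNReal.mul_iInf_of_ne hc0 hctop).symm

lemma rev_ode {μ : Measure (E d)} {Z : ℝ → E d → E d}
    (hode : ∀ ζ u, HasDerivAt (fun s => Z s ζ)
      (∫ z', K (Z u ζ, z') ∂(Measure.map (Z u) μ)) u) :
    ∀ (ζ : E d) (u : ℝ), HasDerivAt (fun s => Z (-s) ζ)
      (∫ z', -K (Z (-u) ζ, z') ∂(Measure.map (Z (-u)) μ)) u := by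
  intro ζ u
  have h0 := hode ζ (-u)
  have h1 : HasDerivAt ((fun s => Z s ζ) ∘ Neg.neg)
      ((-1 : ℝ) • ∫ z', K (Z (-u) ζ, z') ∂(Measure.map (Z (-u)) μ)) u :=
    HasDerivAt.scomp (x := u) h0 (hasDerivAt_neg u)
  have h2 : ((-1 : ℝ) • ∫ z', K (Z (-u) ζ, z') ∂(Measure.map (Z (-u)) μ))
      = ∫ z', -K (Z (-u) ζ, z') ∂(Measure.map (Z (-u)) μ) := by
    rw [neg_one_smul, integral_neg]
  exact h2 ▸ h1

end Main

end Dob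

end AuxDob

/-- Dobrushin's stability estimate: if `Z₁, Z₂` are the mean field
characteristic flows associated with initial probability measures `μ₁^in, μ₂^in`
(with finite first moment), and `μⱼ(t) := Zⱼ(t,·)#μⱼ^in`, then
`dist_{MK,1}(μ₁(t), μ₂(t)) ≤ e^{2L|t|} dist_{MK,1}(μ₁^in, μ₂^in)` for all `t`. -/
theorem stmt5 (d : ℕ) (L : ℝ) (hL : 0 ≤ L)
    (K : EuclideanSpace ℝ (Fin d) × EuclideanSpace ℝ (Fin d) → EuclideanSpace ℝ (Fin d))
    (hK : ContDiff ℝ 1 K)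
    (hK1 : ∀ z z' : EuclideanSpace ℝ (Fin d), K (z, z') = - K (z', z))
    (hK2 : (∀ z z' : EuclideanSpace ℝ (Fin d), ‖fderiv ℝ (fun w => K (w, z')) z‖ ≤ L) ∧
           (∀ z z' : EuclideanSpace ℝ (Fin d), ‖fderiv ℝ (fun w => K (z, w)) z'‖ ≤ L))
    (μ₁ μ₂ : Measure (EuclideanSpace ℝ (Fin d)))
    [IsProbabilityMeasure μ₁] [IsProbabilityMeasure μ₂]
    (hmom₁ : ∫⁻ z, (‖z‖₊ : ℝ≥0∞) ∂μ₁ ≠ ⊤) (hmom₂ : ∫⁻ z, (‖z‖₊ : ℝ≥0∞) ∂μ₂ ≠ ⊤)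
    (Z₁ Z₂ : ℝ → EuclideanSpace ℝ (Fin d) → EuclideanSpace ℝ (Fin d))
    (hZ₁Cont : Continuous (Function.uncurry Z₁))
    (hZ₂Cont : Continuous (Function.uncurry Z₂))
    (hZ₁0 : ∀ ζ, Z₁ 0 ζ = ζ) (hZ₂0 : ∀ ζ, Z₂ 0 ζ = ζ)
    (hZ₁ode : ∀ ζ t, HasDerivAt (fun s => Z₁ s ζ)
      (∫ z', K (Z₁ t ζ, z') ∂(Measure.map (Z₁ t) μ₁)) t)
    (hZ₂ode : ∀ ζ t, HasDerivAt (fun s => Z₂ s ζ)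
      (∫ z', K (Z₂ t ζ, z') ∂(Measure.map (Z₂ t) μ₂)) t) :
    ∀ t : ℝ,
      distMK1 (Measure.map (Z₁ t) μ₁) (Measure.map (Z₂ t) μ₂) ≤
        ENNReal.ofReal (Real.exp (2 * L * |t|)) * distMK1 μ₁ μ₂ := by
  intro t
  rcases le_or_gt 0 t with ht | ht
  · rw [abs_of_nonneg ht]
    exact Dob.main_nonneg hL hK hK1 hK2.1 hK2.2 hmom₁ hmom₂ hZ₁Cont hZ₂Cont hZ₁0 hZ₂0
      hZ₁ode hZ₂ode ht
  · rw [abs_of_neg ht]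
    have hK1' : ∀ z z' : Dob.E d, (fun q : Dob.E d × Dob.E d => -K q) (z, z')
        = - (fun q : Dob.E d × Dob.E d => -K q) (z', z) := by
      intro z z'
      show -K (z, z') = - -K (z', z)
      rw [hK1 z z']
    have hK2a' : ∀ z z' : Dob.E d,
        ‖fderiv ℝ (fun w => (fun q : Dob.E d × Dob.E d => -K q) (w, z')) z‖ ≤ L := by
      intro z z'
      show ‖fderiv ℝ (fun w => -K (w, z')) z‖ ≤ L
      rw [fderiv_fun_neg, norm_neg]
      exact hK2.1 z z'
    have hK2b' : ∀ z z' : Dob.E d,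
        ‖fderiv ℝ (fun w => (fun q : Dob.E d × Dob.E d => -K q) (z, w)) z'‖ ≤ L := by
      intro z z'
      show ‖fderiv ℝ (fun w => -K (z, w)) z'‖ ≤ L
      rw [fderiv_fun_neg, norm_neg]
      exact hK2.2 z z'
    have hZc₁' : Continuous (Function.uncurry fun (s : ℝ) ζ => Z₁ (-s) ζ) :=
      hZ₁Cont.comp ((continuous_fst.neg).prodMk continuous_snd)
    have hZc₂' : Continuous (Function.uncurry fun (s : ℝ) ζ => Z₂ (-s) ζ) :=
      hZ₂Cont.comp ((continuous_fst.neg).prodMk continuous_snd)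
    have hZ0₁' : ∀ ζ, Z₁ (-0) ζ = ζ := fun ζ => by rw [neg_zero]; exact hZ₁0 ζ
    have hZ0₂' : ∀ ζ, Z₂ (-0) ζ = ζ := fun ζ => by rw [neg_zero]; exact hZ₂0 ζ
    have hnt : (0:ℝ) ≤ -t := by linarith
    have h := Dob.main_nonneg (L := L) (K := fun q : Dob.E d × Dob.E d => -K q)
      (μ₁ := μ₁) (μ₂ := μ₂)
      (Z₁ := fun s ζ => Z₁ (-s) ζ) (Z₂ := fun s ζ => Z₂ (-s) ζ)
      hL hK.neg hK1' hK2a' hK2b' hmom₁ hmom₂ hZc₁' hZc₂' hZ0₁' hZ0₂'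
      (Dob.rev_ode hZ₁ode) (Dob.rev_ode hZ₂ode) hnt
    simp only [neg_neg] at h
    exact h
end
end

section
/- (Classical BBGKY hierarchy.) Assume the interaction kernel K satisfies (HK1)-(HK2). Let F_N^in be a symmetric Borel probability measure on (ℝ^d)^N with finite first moment, and set F_N(t) := T_t#F_N^in. Then for each j with 1 ≤ j ≤ N−1 and each φ ∈ C¹_b((ℝ^d)^j), one has, in the sense of distributions in t: (d/dt) ∫ φ(z_1,…,z_j) F_{N:j}(t)(dz_1…dz_j) = (1/N) ∑_{k,l=1}^{j} ∫ K(z_l,z_k)·∇_{z_l}φ(z_1,…,z_j) F_{N:j}(t)(dz_1…dz_j) + ((N−j)/N) ∑_{l=1}^{j} ∫ K(z_l,z_{j+1})·∇_{z_l}φ(z_1,…,z_j) F_{N:j+1}(t)(dz_1…dz_{j+1}), together with the initial conditions F_{N:j}(0) = F^in_{N:j}. -/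
open MeasureTheory Real Filter Topology
open scoped ENNReal NNReal

noncomputable section

open Set

/-- A measure on `(ℝ^d)^N` is symmetric if it is invariant under every
permutation of the coordinates. -/
def IsSymmetricMeasure {d N : ℕ} (P : Measure (Fin N → EuclideanSpace ℝ (Fin d))) :
    Prop :=
  ∀ σ : Equiv.Perm (Fin N),
    Measure.map (fun z (i : Fin N) => z (σ i)) P = P

section BBGKYAux

variable {d : ℕ}
local notation "E" => EuclideanSpace ℝ (Fin d)

theorem Klip' {L : ℝ} (K : E × E → E) (hK : ContDiff ℝ 1 K)
    (hK2 : (∀ z z' : E, ‖fderiv ℝ (fun w => K (w, z')) z‖ ≤ L) ∧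
           (∀ z z' : E, ‖fderiv ℝ (fun w => K (z, w)) z'‖ ≤ L))
    (a b a' b' : E) : ‖K (a, b) - K (a', b')‖ ≤ L * ‖a - a'‖ + L * ‖b - b'‖ := by
  have hdiff : Differentiable ℝ K := hK.differentiable one_ne_zero
  have h1 : ∀ b : E, Differentiable ℝ (fun w : E => K (w, b)) := fun b =>
    hdiff.comp (differentiable_id.prodMk (differentiable_const b))
  have h2 : ∀ a : E, Differentiable ℝ (fun w : E => K (a, w)) := fun a =>
    hdiff.comp ((differentiable_const a).prodMk differentiable_id)
  have e1 : ‖K (a, b) - K (a', b)‖ ≤ L * ‖a - a'‖ := by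
    have := Convex.norm_image_sub_le_of_norm_fderiv_le
      (f := fun w : E => K (w, b)) (fun x _ => h1 b x)
      (fun x _ => hK2.1 x b) convex_univ (Set.mem_univ a') (Set.mem_univ a)
    simpa using this
  have e2 : ‖K (a', b) - K (a', b')‖ ≤ L * ‖b - b'‖ := by
    have := Convex.norm_image_sub_le_of_norm_fderiv_le
      (f := fun w : E => K (a', w)) (fun x _ => h2 a' x)
      (fun x _ => hK2.2 a' x) convex_univ (Set.mem_univ b') (Set.mem_univ b)
    simpa using this
  calc ‖K (a, b) - K (a', b')‖ ≤ ‖K (a, b) - K (a', b)‖ + ‖K (a', b) - K (a', b')‖ :=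
        norm_sub_le_norm_sub_add_norm_sub _ _ _
    _ ≤ L * ‖a - a'‖ + L * ‖b - b'‖ := add_le_add e1 e2

theorem Kgrowth' {L : ℝ} (K : E × E → E) (hK : ContDiff ℝ 1 K)
    (hK2 : (∀ z z' : E, ‖fderiv ℝ (fun w => K (w, z')) z‖ ≤ L) ∧
           (∀ z z' : E, ‖fderiv ℝ (fun w => K (z, w)) z'‖ ≤ L))
    (a b : E) : ‖K (a, b)‖ ≤ ‖K (0, 0)‖ + L * ‖a‖ + L * ‖b‖ := by
  have := Klip' K hK hK2 a b 0 0
  simp only [sub_zero] at this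
  calc ‖K (a, b)‖ ≤ ‖K (a, b) - K (0, 0)‖ + ‖K (0, 0)‖ := by
        simpa using norm_add_le (K (a, b) - K (0, 0)) (K (0, 0))
    _ ≤ (L * ‖a‖ + L * ‖b‖) + ‖K (0, 0)‖ := by linarith
    _ = ‖K (0, 0)‖ + L * ‖a‖ + L * ‖b‖ := by ring

def Vf {d : ℕ}
    (K : EuclideanSpace ℝ (Fin d) × EuclideanSpace ℝ (Fin d) → EuclideanSpace ℝ (Fin d))
    (N : ℕ) : (Fin N → EuclideanSpace ℝ (Fin d)) → (Fin N → EuclideanSpace ℝ (Fin d)) :=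
  fun Z i => (N : ℝ)⁻¹ • ∑ k, K (Z i, Z k)

theorem Vf_lipschitz {L : ℝ} (hL : 0 ≤ L) (K : E × E → E) (hK : ContDiff ℝ 1 K)
    (hK2 : (∀ z z' : E, ‖fderiv ℝ (fun w => K (w, z')) z‖ ≤ L) ∧
           (∀ z z' : E, ‖fderiv ℝ (fun w => K (z, w)) z'‖ ≤ L))
    (N : ℕ) : LipschitzWith (2 * L).toNNReal (Vf K N) := by
  apply LipschitzWith.of_dist_le_mul
  intro Z Z'
  rw [dist_eq_norm, dist_eq_norm, Real.coe_toNNReal _ (by positivity)]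
  rcases Nat.eq_zero_or_pos N with h0 | hN
  · subst h0
    have : (Vf K 0 Z - Vf K 0 Z' : Fin 0 → E) = 0 := by
      funext i; exact absurd i.2 (by omega)
    rw [this, norm_zero]; positivity
  apply pi_norm_le_iff_of_nonneg (by positivity) |>.2
  intro i
  have : (Vf K N Z - Vf K N Z') i
      = (N : ℝ)⁻¹ • ∑ k, (K (Z i, Z k) - K (Z' i, Z' k)) := by
    simp [Vf, Finset.sum_sub_distrib, smul_sub]
  rw [this, norm_smul]
  have hb : ‖∑ k, (K (Z i, Z k) - K (Z' i, Z' k))‖ ≤ N * (2 * L * ‖Z - Z'‖) := by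
    calc ‖∑ k, (K (Z i, Z k) - K (Z' i, Z' k))‖ ≤ ∑ k : Fin N, (2 * L * ‖Z - Z'‖) := by
          apply norm_sum_le_of_le
          intro k _
          calc ‖K (Z i, Z k) - K (Z' i, Z' k)‖ ≤ L * ‖Z i - Z' i‖ + L * ‖Z k - Z' k‖ :=
                Klip' K hK hK2 _ _ _ _
            _ ≤ L * ‖Z - Z'‖ + L * ‖Z - Z'‖ := by
                have h1 : ‖Z i - Z' i‖ ≤ ‖Z - Z'‖ := by
                  simpa using norm_le_pi_norm (Z - Z') i
                have h2 : ‖Z k - Z' k‖ ≤ ‖Z - Z'‖ := by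
                  simpa using norm_le_pi_norm (Z - Z') k
                have := mul_le_mul_of_nonneg_left h1 hL
                have := mul_le_mul_of_nonneg_left h2 hL
                linarith
            _ = 2 * L * ‖Z - Z'‖ := by ring
      _ = N * (2 * L * ‖Z - Z'‖) := by simp [Finset.sum_const, mul_comm]
  calc ‖(N : ℝ)⁻¹‖ * ‖∑ k, (K (Z i, Z k) - K (Z' i, Z' k))‖
      ≤ (N : ℝ)⁻¹ * (N * (2 * L * ‖Z - Z'‖)) := by
        rw [Real.norm_eq_abs, abs_of_nonneg (by positivity)]
        exact mul_le_mul_of_nonneg_left hb (by positivity)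
    _ = 2 * L * ‖Z - Z'‖ := by
        field_simp
  -- extra goal? none

theorem Vf_growth {L : ℝ} (hL : 0 ≤ L) (K : E × E → E) (hK : ContDiff ℝ 1 K)
    (hK2 : (∀ z z' : E, ‖fderiv ℝ (fun w => K (w, z')) z‖ ≤ L) ∧
           (∀ z z' : E, ‖fderiv ℝ (fun w => K (z, w)) z'‖ ≤ L))
    {N : ℕ} (hN : 1 ≤ N) (Z : Fin N → E) :
    ‖Vf K N Z‖ ≤ ‖K (0, 0)‖ + 2 * L * ‖Z‖ := by
  apply pi_norm_le_iff_of_nonneg (by positivity) |>.2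
  intro i
  rw [Vf, norm_smul, Real.norm_eq_abs, abs_of_nonneg (by positivity)]
  have hb : ‖∑ k, K (Z i, Z k)‖ ≤ N * (‖K (0, 0)‖ + 2 * L * ‖Z‖) := by
    calc ‖∑ k, K (Z i, Z k)‖ ≤ ∑ k : Fin N, (‖K (0, 0)‖ + 2 * L * ‖Z‖) := by
          apply norm_sum_le_of_le
          intro k _
          calc ‖K (Z i, Z k)‖ ≤ ‖K (0, 0)‖ + L * ‖Z i‖ + L * ‖Z k‖ := Kgrowth' K hK hK2 _ _
            _ ≤ ‖K (0, 0)‖ + 2 * L * ‖Z‖ := by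
                have h1 : ‖Z i‖ ≤ ‖Z‖ := norm_le_pi_norm Z i
                have h2 : ‖Z k‖ ≤ ‖Z‖ := norm_le_pi_norm Z k
                have := mul_le_mul_of_nonneg_left h1 hL
                have := mul_le_mul_of_nonneg_left h2 hL
                linarith
      _ = N * (‖K (0, 0)‖ + 2 * L * ‖Z‖) := by
          simp [Finset.sum_const]
          ring
  calc (N : ℝ)⁻¹ * ‖∑ k, K (Z i, Z k)‖ ≤ (N : ℝ)⁻¹ * (N * (‖K (0, 0)‖ + 2 * L * ‖Z‖)) :=
        mul_le_mul_of_nonneg_left hb (by positivity)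
    _ = ‖K (0, 0)‖ + 2 * L * ‖Z‖ := by
        have : (N : ℝ) ≠ 0 := by positivity
        field_simp

theorem gronwallBound_mono' {δ Kc ε : ℝ} (hδ : 0 ≤ δ) (hK : 0 ≤ Kc) (hε : 0 ≤ ε)
    {x y : ℝ} (hxy : x ≤ y) : gronwallBound δ Kc ε x ≤ gronwallBound δ Kc ε y := by
  rcases eq_or_lt_of_le hK with hK0 | hKpos
  · rw [← hK0, gronwallBound_K0]
    dsimp only
    nlinarith
  · rw [gronwallBound_of_K_ne_0 hKpos.ne']
    dsimp only
    have hexp : exp (Kc * x) ≤ exp (Kc * y) :=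
      Real.exp_le_exp.2 (mul_le_mul_of_nonneg_left hxy hKpos.le)
    have h1 : δ * exp (Kc * x) ≤ δ * exp (Kc * y) := mul_le_mul_of_nonneg_left hexp hδ
    have h2 : ε / Kc * (exp (Kc * x) - 1) ≤ ε / Kc * (exp (Kc * y) - 1) := by
      apply mul_le_mul_of_nonneg_left (by linarith) (by positivity)
    linarith

theorem gronwallBound_split (δ Kc ε x : ℝ) :
    gronwallBound δ Kc ε x = δ * exp (Kc * x) + gronwallBound 0 Kc ε x := by
  rcases eq_or_ne Kc 0 with h | h
  · subst h; rw [gronwallBound_K0, gronwallBound_K0]; simp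
  · rw [gronwallBound_of_K_ne_0 h, gronwallBound_of_K_ne_0 h]; ring

theorem gronwallBound_nonneg {δ Kc ε : ℝ} (hδ : 0 ≤ δ) (hK : 0 ≤ Kc) (hε : 0 ≤ ε)
    {x : ℝ} (hx : 0 ≤ x) : 0 ≤ gronwallBound δ Kc ε x := by
  rcases eq_or_lt_of_le hK with h | h
  · rw [← h, gronwallBound_K0]
    dsimp only
    nlinarith
  · rw [gronwallBound_of_K_ne_0 h.ne']
    dsimp only
    have h1 : (1 : ℝ) ≤ Real.exp (Kc * x) := by
      rw [← Real.exp_zero]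
      exact Real.exp_le_exp.2 (by positivity)
    have h2 : 0 ≤ ε / Kc := by positivity
    nlinarith [Real.exp_pos (Kc * x)]

theorem flow_equivariant {d : ℕ} {L : ℝ} (hL : 0 ≤ L)
    (K : EuclideanSpace ℝ (Fin d) × EuclideanSpace ℝ (Fin d) → EuclideanSpace ℝ (Fin d))
    (hK : ContDiff ℝ 1 K)
    (hK2 : (∀ z z' : EuclideanSpace ℝ (Fin d), ‖fderiv ℝ (fun w => K (w, z')) z‖ ≤ L) ∧
           (∀ z z' : EuclideanSpace ℝ (Fin d), ‖fderiv ℝ (fun w => K (z, w)) z'‖ ≤ L))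
    {N : ℕ}
    (T : ℝ → (Fin N → EuclideanSpace ℝ (Fin d)) → (Fin N → EuclideanSpace ℝ (Fin d)))
    (hT0 : ∀ Z, T 0 Z = Z)
    (hTode : ∀ Z t, HasDerivAt (fun s => T s Z)
      (fun i => (N : ℝ)⁻¹ • ∑ j : Fin N, K (T t Z i, T t Z j)) t)
    (σ : Equiv.Perm (Fin N)) (Z : Fin N → EuclideanSpace ℝ (Fin d)) (s : ℝ) :
    T s (fun i => Z (σ i)) = fun i => T s Z (σ i) := by
  have hode : ∀ Z t, HasDerivAt (fun s => T s Z) (Vf K N (T t Z)) t := hTode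
  set S : ℝ := |s| + 1 with hS
  have hsmem : s ∈ Icc (-S) S := by
    constructor <;> [nlinarith [abs_nonneg s, neg_abs_le s]; nlinarith [le_abs_self s]]
  have h0mem : (0 : ℝ) ∈ Ioo (-S) S := by
    constructor <;> nlinarith [abs_nonneg s]
  have hlip : ∀ _t : ℝ, LipschitzOnWith (2 * L).toNNReal (Vf K N)
      (univ : Set (Fin N → EuclideanSpace ℝ (Fin d))) :=
    fun _ => (Vf_lipschitz hL K hK hK2 N).lipschitzOnWith
  have hg' : ∀ t : ℝ, HasDerivAt (fun u => (fun i => T u Z (σ i)))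
      (Vf K N (fun i => T t Z (σ i))) t := by
    intro t
    rw [hasDerivAt_pi]
    intro i
    have h1 := (hasDerivAt_pi.1 (hode Z t)) (σ i)
    convert h1 using 1
    show Vf K N (fun i => T t Z (σ i)) i = Vf K N (T t Z) (σ i)
    simp only [Vf]
    congr 1
    exact Equiv.sum_comp σ (fun k => K (T t Z (σ i), T t Z k))
  have := ODE_solution_unique_of_mem_Icc (v := fun _ => Vf K N)
    (s := fun _ => (univ : Set (Fin N → EuclideanSpace ℝ (Fin d))))
    (fun t _ => hlip t) h0mem
    (f := fun u => T u (fun i => Z (σ i)))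
    (fun t _ => (hode _ t).continuousAt.continuousWithinAt)
    (fun t _ => hode _ t) (fun _ _ => mem_univ _)
    (g := fun u => (fun i => T u Z (σ i)))
    (fun t _ => (hg' t).continuousAt.continuousWithinAt)
    (fun t _ => hg' t) (fun _ _ => mem_univ _)
    (by simp [hT0])
  exact this hsmem

theorem flow_bound {d : ℕ} {L : ℝ} (hL : 0 ≤ L)
    (K : EuclideanSpace ℝ (Fin d) × EuclideanSpace ℝ (Fin d) → EuclideanSpace ℝ (Fin d))
    (hK : ContDiff ℝ 1 K)
    (hK2 : (∀ z z' : EuclideanSpace ℝ (Fin d), ‖fderiv ℝ (fun w => K (w, z')) z‖ ≤ L) ∧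
           (∀ z z' : EuclideanSpace ℝ (Fin d), ‖fderiv ℝ (fun w => K (z, w)) z'‖ ≤ L))
    {N : ℕ} (hN : 1 ≤ N)
    (T : ℝ → (Fin N → EuclideanSpace ℝ (Fin d)) → (Fin N → EuclideanSpace ℝ (Fin d)))
    (hT0 : ∀ Z, T 0 Z = Z)
    (hTode : ∀ Z t, HasDerivAt (fun s => T s Z)
      (fun i => (N : ℝ)⁻¹ • ∑ j : Fin N, K (T t Z i, T t Z j)) t)
    {S : ℝ} (hS : 0 ≤ S) (Z : Fin N → EuclideanSpace ℝ (Fin d)) {s : ℝ}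
    (hs : s ∈ Icc (-S) S) :
    ‖T s Z‖ ≤ gronwallBound ‖Z‖ (2 * L) ‖K (0, 0)‖ S := by
  have hode : ∀ Z t, HasDerivAt (fun s => T s Z) (Vf K N (T t Z)) t := hTode
  have hbd : ∀ t : ℝ, ‖Vf K N (T t Z)‖ ≤ 2 * L * ‖T t Z‖ + ‖K (0, 0)‖ := by
    intro t
    have := Vf_growth hL K hK hK2 hN (T t Z)
    linarith
  rcases le_or_gt 0 s with h | h
  · have key := norm_le_gronwallBound_of_norm_deriv_right_le
      (f := fun u => T u Z) (f' := fun u => Vf K N (T u Z))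
      (a := 0) (b := s) (δ := ‖Z‖) (K := 2 * L) (ε := ‖K (0, 0)‖)
      (fun t _ => (hode Z t).continuousAt.continuousWithinAt)
      (fun t _ => (hode Z t).hasDerivWithinAt)
      (by simp [hT0]) (fun t _ => by simpa using hbd t)
    have h2 := key s ⟨h, le_refl s⟩
    rw [sub_zero] at h2
    exact h2.trans (gronwallBound_mono' (norm_nonneg _) (by positivity) (norm_nonneg _) hs.2)
  · have hode' : ∀ t : ℝ, HasDerivAt (fun u : ℝ => T (-u) Z) (-(Vf K N (T (-t) Z))) t := by
      intro t
      have h1 := hode Z (-t)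
      have h2 : HasDerivAt (fun u : ℝ => -u) (-1 : ℝ) t := (hasDerivAt_neg t)
      have := h1.scomp t h2
      simpa [Function.comp_def] using this
    have key := norm_le_gronwallBound_of_norm_deriv_right_le
      (f := fun u : ℝ => T (-u) Z) (f' := fun u => -(Vf K N (T (-u) Z)))
      (a := 0) (b := -s) (δ := ‖Z‖) (K := 2 * L) (ε := ‖K (0, 0)‖)
      (fun t _ => (hode' t).continuousAt.continuousWithinAt)
      (fun t _ => (hode' t).hasDerivWithinAt)
      (by simp [hT0]) (fun t _ => by simpa using hbd (-t))
    have h2 := key (-s) ⟨by linarith, le_refl _⟩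
    simp only [sub_zero, neg_neg] at h2
    refine h2.trans (gronwallBound_mono' (norm_nonneg _) (by positivity) (norm_nonneg _) ?_)
    have := hs.1; linarith

theorem norm_integrable_of_mom {d N : ℕ}
    (F : Measure (Fin N → EuclideanSpace ℝ (Fin d))) [IsProbabilityMeasure F]
    (hFmom : (∫⁻ Z, ∑ i : Fin N, (‖Z i‖₊ : ℝ≥0∞) ∂F) ≠ ⊤) :
    Integrable (fun Z : Fin N → EuclideanSpace ℝ (Fin d) => ‖Z‖) F := by
  have hsum : Integrable (fun Z : Fin N → EuclideanSpace ℝ (Fin d) => ∑ i, ‖Z i‖) F := by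
    constructor
    · exact (continuous_finset_sum _ fun i _ => (continuous_apply i).norm).aestronglyMeasurable
    · rw [HasFiniteIntegral]
      calc (∫⁻ Z, (‖∑ i, ‖Z i‖‖₊ : ℝ≥0∞) ∂F) ≤ ∫⁻ Z, ∑ i : Fin N, (‖Z i‖₊ : ℝ≥0∞) ∂F := by
            apply lintegral_mono
            intro Z
            calc (‖∑ i, ‖Z i‖‖₊ : ℝ≥0∞) ≤ ((∑ i, ‖‖Z i‖‖₊ : ℝ≥0) : ℝ≥0∞) := by
                  exact_mod_cast nnnorm_sum_le _ _
              _ = ∑ i : Fin N, (‖Z i‖₊ : ℝ≥0∞) := by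
                  push_cast
                  simp [nnnorm_norm]
        _ < ⊤ := hFmom.lt_top
  apply hsum.mono'
  · exact continuous_norm.aestronglyMeasurable
  · filter_upwards with Z
    rw [Real.norm_eq_abs, abs_of_nonneg (norm_nonneg _)]
    apply pi_norm_le_iff_of_nonneg (Finset.sum_nonneg fun i _ => norm_nonneg _) |>.2
    intro i
    exact Finset.single_le_sum (fun k _ => norm_nonneg (Z k)) (Finset.mem_univ i)

end BBGKYAux

/-- classical BBGKY hierarchy: if `F_N(t) = T_t#F_N^in` where `T_t`
is the `N`-particle flow and `F_N^in` is a symmetric probability measure with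
finite first moment, then for each `1 ≤ j ≤ N-1` and each `φ ∈ C¹_b((ℝ^d)^j)`,
`d/dt ∫ φ dF_{N:j}(t) = (1/N) ∑_{k,l≤j} ∫ K(z_l,z_k)·∇_{z_l}φ dF_{N:j}(t)
 + ((N−j)/N) ∑_{l≤j} ∫ K(z_l,z_{j+1})·∇_{z_l}φ dF_{N:j+1}(t)`,
with initial conditions `F_{N:j}(0) = F^in_{N:j}`. -/
theorem stmt12 (d : ℕ) (L : ℝ) (hL : 0 ≤ L)
    (K : EuclideanSpace ℝ (Fin d) × EuclideanSpace ℝ (Fin d) → EuclideanSpace ℝ (Fin d))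
    (hK : ContDiff ℝ 1 K)
    (hK1 : ∀ z z' : EuclideanSpace ℝ (Fin d), K (z, z') = - K (z', z))
    (hK2 : (∀ z z' : EuclideanSpace ℝ (Fin d), ‖fderiv ℝ (fun w => K (w, z')) z‖ ≤ L) ∧
           (∀ z z' : EuclideanSpace ℝ (Fin d), ‖fderiv ℝ (fun w => K (z, w)) z'‖ ≤ L))
    (N : ℕ) (hN : 1 ≤ N)
    -- the flow of the N-particle ODE system
    (T : ℝ → (Fin N → EuclideanSpace ℝ (Fin d)) → (Fin N → EuclideanSpace ℝ (Fin d)))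
    (hTmeas : ∀ t, Measurable (T t))
    (hT0 : ∀ Z, T 0 Z = Z)
    (hTode : ∀ Z t, HasDerivAt (fun s => T s Z)
      (fun i => (N : ℝ)⁻¹ • ∑ j : Fin N, K (T t Z i, T t Z j)) t)
    -- the initial N-particle distribution
    (F : Measure (Fin N → EuclideanSpace ℝ (Fin d)))
    (hFprob : IsProbabilityMeasure F) (hFsym : IsSymmetricMeasure F)
    (hFmom : (∫⁻ Z, ∑ i : Fin N, (‖Z i‖₊ : ℝ≥0∞) ∂F) ≠ ⊤)
    (j : ℕ) (hj : 1 ≤ j) (hjN : j + 1 ≤ N)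
    (φ : (Fin j → EuclideanSpace ℝ (Fin d)) → ℝ)
    (hφ : ContDiff ℝ 1 φ) (hφbd : ∃ C : ℝ, ∀ w, |φ w| ≤ C)
    (hφ'bd : ∃ C : ℝ, ∀ w, ‖fderiv ℝ φ w‖ ≤ C) :
    -- the j-th equation of the BBGKY hierarchy, in weak form
    (∀ t : ℝ,
      HasDerivAt
        (fun s => ∫ w, φ w ∂(Measure.map
          (fun Z (i : Fin j) => Z (Fin.castLE (Nat.le_of_succ_le hjN) i))
          (Measure.map (T s) F)))
        ((N : ℝ)⁻¹ *
          ∑ k : Fin j, ∑ l : Fin j,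
            ∫ w, fderiv ℝ φ w (Pi.single l (K (w l, w k)))
              ∂(Measure.map
                (fun Z (i : Fin j) => Z (Fin.castLE (Nat.le_of_succ_le hjN) i))
                (Measure.map (T t) F)) +
         ((N : ℝ) - j) / N *
          ∑ l : Fin j,
            ∫ w, fderiv ℝ φ (fun i => w (Fin.castSucc i))
                (Pi.single l (K (w (Fin.castSucc l), w (Fin.last j))))
              ∂(Measure.map
                (fun Z (i : Fin (j + 1)) => Z (Fin.castLE hjN i))
                (Measure.map (T t) F))) t) ∧
    -- the initial condition F_{N:j}(0) = F^in_{N:j}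
    (Measure.map (fun Z (i : Fin j) => Z (Fin.castLE (Nat.le_of_succ_le hjN) i))
        (Measure.map (T 0) F) =
      Measure.map (fun Z (i : Fin j) => Z (Fin.castLE (Nat.le_of_succ_le hjN) i)) F) := by
  haveI := hFprob
  have jle : j ≤ N := Nat.le_of_succ_le hjN
  let E := EuclideanSpace ℝ (Fin d)
  -- projections
  set projj : (Fin N → E) → (Fin j → E) := fun Z i => Z (Fin.castLE jle i) with hprojj
  set projj1 : (Fin N → E) → (Fin (j+1) → E) := fun Z i => Z (Fin.castLE hjN i) with hprojj1
  have hprojj_meas : Measurable projj :=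
    measurable_pi_lambda _ (fun i => measurable_pi_apply _)
  have hprojj1_meas : Measurable projj1 :=
    measurable_pi_lambda _ (fun i => measurable_pi_apply _)
  have hprojj_cont : Continuous projj :=
    continuous_pi (fun i => continuous_apply _)
  have hprojj1_cont : Continuous projj1 :=
    continuous_pi (fun i => continuous_apply _)
  have hproj_norm : ∀ Z : Fin N → E, ‖projj Z‖ ≤ ‖Z‖ := by
    intro Z
    exact pi_norm_le_iff_of_nonneg (norm_nonneg Z) |>.2 fun i => norm_le_pi_norm Z _
  -- initial condition
  refine ⟨?_, by rw [show T 0 = id from funext hT0, Measure.map_id]⟩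
  intro t
  -- constants
  obtain ⟨Cφ, hCφ⟩ := hφbd
  obtain ⟨Cφ', hCφ'⟩ := hφ'bd
  have hCφ'0 : 0 ≤ Cφ' := le_trans (norm_nonneg _) (hCφ' 0)
  set C0 : ℝ := ‖K (0, 0)‖ with hC0
  set S : ℝ := |t| + 1 with hS
  have hS0 : (0 : ℝ) ≤ S := by positivity
  set GB : (Fin N → E) → ℝ := fun Z => gronwallBound ‖Z‖ (2 * L) C0 S with hGB
  have hGB_nonneg : ∀ Z, 0 ≤ GB Z := fun Z =>
    gronwallBound_nonneg (norm_nonneg _) (by positivity) (norm_nonneg _) hS0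
  have hGB_int : Integrable GB F := by
    have h1 : Integrable (fun Z : Fin N → E => ‖Z‖) F := norm_integrable_of_mom F hFmom
    have : GB = fun Z => ‖Z‖ * exp (2 * L * S) + gronwallBound 0 (2 * L) C0 S := by
      funext Z; exact gronwallBound_split _ _ _ _
    rw [this]
    exact (h1.mul_const _).add (integrable_const _)
  have hTbound : ∀ Z : Fin N → E, ∀ s ∈ Icc (-S) S, ‖T s Z‖ ≤ GB Z := by
    intro Z s hs
    exact flow_bound hL K hK hK2 hN T hT0 hTode hS0 Z hs
  have htmem : t ∈ Icc (-S) S := by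
    constructor
    · have := neg_abs_le t; simp only [hS]; linarith
    · have := le_abs_self t; simp only [hS]; linarith
  -- continuity of the vector field
  have hVcont : Continuous (Vf K N) := by
    apply continuous_pi
    intro i
    show Continuous fun a : Fin N → E => (N : ℝ)⁻¹ • ∑ k, K (a i, a k)
    refine (?_ : Continuous fun a : Fin N → E => ∑ k, K (a i, a k)).const_smul ((N : ℝ)⁻¹)
    apply continuous_finset_sum
    intro k _
    exact hK.continuous.comp ((continuous_apply i).prodMk (continuous_apply k))
  have hfdcont : Continuous (fderiv ℝ φ) := hφ.continuous_fderiv one_ne_zero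
  -- the integrand and its derivative
  set G : ℝ → (Fin N → E) → ℝ := fun s Z => φ (projj (T s Z)) with hGdef
  set G' : ℝ → (Fin N → E) → ℝ :=
    fun s Z => fderiv ℝ φ (projj (T s Z)) (projj (Vf K N (T s Z))) with hG'def
  -- derivative of the integrand
  have hGderiv : ∀ Z : Fin N → E, ∀ s : ℝ, HasDerivAt (fun u => G u Z) (G' s Z) s := by
    intro Z s
    have h1 : HasDerivAt (fun u => T u Z) (Vf K N (T s Z)) s := hTode Z s
    have h2 : HasDerivAt (fun u => projj (T u Z)) (projj (Vf K N (T s Z))) s := by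
      rw [hasDerivAt_pi]
      intro i
      exact hasDerivAt_pi.1 h1 (Fin.castLE jle i)
    exact ((hφ.differentiable one_ne_zero) _).hasFDerivAt.comp_hasDerivAt s h2
  -- measurability
  have hGmeas : ∀ s : ℝ, AEStronglyMeasurable (G s) F := by
    intro s
    exact (((hφ.continuous.comp hprojj_cont).measurable).comp (hTmeas s)).aestronglyMeasurable
  have happlycont : ∀ (v : (Fin N → E) → (Fin j → E)), Continuous v →
      ∀ (u : (Fin N → E) → (Fin j → E)), Continuous u →
      Continuous (fun Y => fderiv ℝ φ (u Y) (v Y)) := by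
    intro v hv u hu
    exact isBoundedBilinearMap_apply.continuous.comp
      ((hfdcont.comp hu).prodMk hv)
  have hG'meas : ∀ s : ℝ, AEStronglyMeasurable (G' s) F := by
    intro s
    have hc : Continuous (fun Y : Fin N → E => fderiv ℝ φ (projj Y) (projj (Vf K N Y))) :=
      happlycont _ (hprojj_cont.comp hVcont) _ hprojj_cont
    exact ((hc.measurable).comp (hTmeas s)).aestronglyMeasurable
  -- bound on the derivative
  set bound : (Fin N → E) → ℝ := fun Z => Cφ' * (C0 + 2 * L * GB Z) with hbound
  have hbound_int : Integrable bound F := by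
    apply Integrable.const_mul
    exact (integrable_const _).add (hGB_int.const_mul _)
  have hG'bound : ∀ Z : Fin N → E, ∀ s ∈ Metric.ball t 1, ‖G' s Z‖ ≤ bound Z := by
    intro Z s hs
    have hsmem : s ∈ Icc (-S) S := by
      rw [Metric.mem_ball, Real.dist_eq] at hs
      have h1 : |s| < S := by
        have h2 := abs_sub_abs_le_abs_sub s t
        simp only [hS]; linarith
      constructor
      · linarith [neg_abs_le s]
      · linarith [le_abs_self s]
    calc ‖G' s Z‖ ≤ ‖fderiv ℝ φ (projj (T s Z))‖ * ‖projj (Vf K N (T s Z))‖ :=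
          ContinuousLinearMap.le_opNorm _ _
      _ ≤ bound Z := by
          have hv := Vf_growth hL K hK hK2 hN (T s Z)
          have hTb := hTbound Z s hsmem
          have h2 : ‖projj (Vf K N (T s Z))‖ ≤ C0 + 2 * L * GB Z :=
            le_trans (hproj_norm _) (le_trans hv (by nlinarith))
          have h3 : (0 : ℝ) ≤ C0 + 2 * L * GB Z :=
            le_trans (norm_nonneg _) h2
          exact mul_le_mul (hCφ' _) h2 (norm_nonneg _) hCφ'0
  -- integrability of G t
  have hGint : Integrable (G t) F := by
    apply (integrable_const Cφ).mono' (hGmeas t)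
    filter_upwards with Z
    rw [Real.norm_eq_abs]
    exact hCφ _
  -- differentiation under the integral sign
  have hmain := hasDerivAt_integral_of_dominated_loc_of_deriv_le (F := G) (F' := G')
    (μ := F) (x₀ := t) (bound := bound) (Metric.ball_mem_nhds t one_pos)
    (.of_forall hGmeas) hGint (hG'meas t)
    (.of_forall hG'bound) hbound_int
    (.of_forall fun Z s hs => hGderiv Z s)
  -- rewrite the function being differentiated
  have hfun_eq : (fun s => ∫ w, φ w ∂(Measure.map
          (fun Z (i : Fin j) => Z (Fin.castLE (Nat.le_of_succ_le hjN) i))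
          (Measure.map (T s) F))) = fun s => ∫ Z, G s Z ∂F := by
    funext s
    rw [Measure.map_map hprojj_meas (hTmeas s)]
    exact integral_map ((hprojj_meas.comp (hTmeas s)).aemeasurable)
      hφ.continuous.aestronglyMeasurable
  -- identify the derivative with the RHS
  have hderiv_eq : (∫ Z, G' t Z ∂F) =
      ((N : ℝ)⁻¹ *
          ∑ k : Fin j, ∑ l : Fin j,
            ∫ w, fderiv ℝ φ w (Pi.single l (K (w l, w k)))
              ∂(Measure.map
                (fun Z (i : Fin j) => Z (Fin.castLE (Nat.le_of_succ_le hjN) i))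
                (Measure.map (T t) F)) +
         ((N : ℝ) - j) / N *
          ∑ l : Fin j,
            ∫ w, fderiv ℝ φ (fun i => w (Fin.castSucc i))
                (Pi.single l (K (w (Fin.castSucc l), w (Fin.last j))))
              ∂(Measure.map
                (fun Z (i : Fin (j + 1)) => Z (Fin.castLE hjN i))
                (Measure.map (T t) F))) := by
    classical
    have hNne : (N : ℝ) ≠ 0 := by positivity
    -- the elementary integrals
    set A : Fin j → Fin N → ℝ := fun l k =>
      ∫ Z, fderiv ℝ φ (projj (T t Z))
        (Pi.single l (K (T t Z (Fin.castLE jle l), T t Z k))) ∂F with hA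
    have hsinglecont : ∀ l : Fin j,
        Continuous (fun x : EuclideanSpace ℝ (Fin d) =>
          (Pi.single l x : Fin j → EuclideanSpace ℝ (Fin d))) := by
      intro l
      apply continuous_pi
      intro i
      by_cases h : i = l
      · subst h
        simp only [Pi.single_eq_same]
        exact continuous_id
      · simp only [Pi.single_eq_of_ne h]
        exact continuous_const
    have hHcont : ∀ (l : Fin j) (a b : Fin N),
        Continuous (fun Y : Fin N → EuclideanSpace ℝ (Fin d) =>
          fderiv ℝ φ (projj Y) (Pi.single l (K (Y a, Y b)))) := by
      intro l a b
      exact isBoundedBilinearMap_apply.continuous.comp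
        ((hfdcont.comp hprojj_cont).prodMk ((hsinglecont l).comp
          (hK.continuous.comp ((continuous_apply a).prodMk (continuous_apply b)))))
    have hHbound : ∀ (l : Fin j) (a b : Fin N) (Z : Fin N → EuclideanSpace ℝ (Fin d)),
        ‖fderiv ℝ φ (projj (T t Z)) (Pi.single l (K (T t Z a, T t Z b)))‖ ≤ bound Z := by
      intro l a b Z
      have hTb := hTbound Z t htmem
      have hKg := Kgrowth' K hK hK2 (T t Z a) (T t Z b)
      have ha : ‖T t Z a‖ ≤ GB Z := le_trans (norm_le_pi_norm _ a) hTb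
      have hb : ‖T t Z b‖ ≤ GB Z := le_trans (norm_le_pi_norm _ b) hTb
      calc ‖fderiv ℝ φ (projj (T t Z)) (Pi.single l (K (T t Z a, T t Z b)))‖
          ≤ ‖fderiv ℝ φ (projj (T t Z))‖ * ‖(Pi.single l (K (T t Z a, T t Z b)) :
              Fin j → EuclideanSpace ℝ (Fin d))‖ := ContinuousLinearMap.le_opNorm _ _
        _ ≤ Cφ' * (C0 + 2 * L * GB Z) := by
            rw [Pi.norm_single]
            have h2 : ‖K (T t Z a, T t Z b)‖ ≤ C0 + 2 * L * GB Z := by nlinarith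
            exact mul_le_mul (hCφ' _) h2 (norm_nonneg _) hCφ'0
    have hHint : ∀ (l : Fin j) (a b : Fin N),
        Integrable (fun Z => fderiv ℝ φ (projj (T t Z))
          (Pi.single l (K (T t Z a, T t Z b)))) F := by
      intro l a b
      apply hbound_int.mono'
        (((hHcont l a b).measurable.comp (hTmeas t)).aestronglyMeasurable)
      filter_upwards with Z
      exact hHbound l a b Z
    -- pointwise decomposition of G' t
    have hptwise : ∀ Z : Fin N → EuclideanSpace ℝ (Fin d),
        G' t Z = (N : ℝ)⁻¹ * ∑ l : Fin j, ∑ k : Fin N,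
          fderiv ℝ φ (projj (T t Z))
            (Pi.single l (K (T t Z (Fin.castLE jle l), T t Z k))) := by
      intro Z
      have hv : projj (Vf K N (T t Z)) = ∑ l : Fin j,
          Pi.single l ((N : ℝ)⁻¹ • ∑ k : Fin N, K (T t Z (Fin.castLE jle l), T t Z k)) := by
        exact (Finset.univ_sum_single (projj (Vf K N (T t Z)))).symm
      have : G' t Z = fderiv ℝ φ (projj (T t Z)) (projj (Vf K N (T t Z))) := rfl
      rw [this, hv, map_sum]
      rw [Finset.mul_sum]
      apply Finset.sum_congr rfl
      intro l _
      have hsum : (Pi.single l ((N : ℝ)⁻¹ • ∑ k : Fin N, K (T t Z (Fin.castLE jle l), T t Z k)) :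
          Fin j → EuclideanSpace ℝ (Fin d))
          = (N : ℝ)⁻¹ • ∑ k : Fin N, (Pi.single l (K (T t Z (Fin.castLE jle l), T t Z k)) :
            Fin j → EuclideanSpace ℝ (Fin d)) := by
        rw [← LinearMap.coe_single ℝ (fun _ : Fin j => EuclideanSpace ℝ (Fin d)), _root_.map_smul,
          map_sum]
      rw [hsum, _root_.map_smul, smul_eq_mul, map_sum]
    -- the integral of G' t
    have hint1 : ∫ Z, G' t Z ∂F = (N : ℝ)⁻¹ * ∑ l : Fin j, ∑ k : Fin N, A l k := by
      rw [show (fun Z => G' t Z) = fun Z => (N : ℝ)⁻¹ * ∑ l : Fin j, ∑ k : Fin N,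
          fderiv ℝ φ (projj (T t Z))
            (Pi.single l (K (T t Z (Fin.castLE jle l), T t Z k))) from funext hptwise]
      rw [integral_const_mul]
      congr 1
      rw [integral_finset_sum _ (fun l _ => integrable_finset_sum _ (fun k _ => hHint l _ k))]
      apply Finset.sum_congr rfl
      intro l _
      rw [integral_finset_sum _ (fun k _ => hHint l _ k)]
    -- symmetry of the pushed-forward measure
    have hPσmeas : ∀ σ : Equiv.Perm (Fin N),
        Measurable (fun Z : Fin N → EuclideanSpace ℝ (Fin d) => fun i => Z (σ i)) :=
      fun σ => measurable_pi_lambda _ fun i => measurable_pi_apply _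
    have hmapsym : ∀ σ : Equiv.Perm (Fin N),
        Measure.map (fun Z (i : Fin N) => Z (σ i)) (Measure.map (T t) F)
          = Measure.map (T t) F := by
      intro σ
      rw [Measure.map_map (hPσmeas σ) (hTmeas t)]
      have hcomm : ((fun Z (i : Fin N) => Z (σ i)) ∘ (T t))
          = (T t) ∘ (fun Z (i : Fin N) => Z (σ i)) := by
        funext Z
        exact (flow_equivariant hL K hK hK2 T hT0 hTode σ Z t).symm
      rw [hcomm, ← Measure.map_map (hTmeas t) (hPσmeas σ), hFsym σ]
    have hAalt : ∀ (l : Fin j) (k : Fin N),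
        A l k = ∫ Y, fderiv ℝ φ (projj Y)
          (Pi.single l (K (Y (Fin.castLE jle l), Y k))) ∂(Measure.map (T t) F) := by
      intro l k
      rw [integral_map (hTmeas t).aemeasurable (hHcont l _ k).aestronglyMeasurable]
    -- the symmetry argument
    have hsym : ∀ (l : Fin j) (k : Fin N), j ≤ (k : ℕ) → A l k = A l ⟨j, hjN⟩ := by
      intro l k hk
      set k0 : Fin N := ⟨j, hjN⟩ with hk0
      set σ : Equiv.Perm (Fin N) := Equiv.swap k k0 with hσ
      have hfix : ∀ i : Fin j, σ (Fin.castLE jle i) = Fin.castLE jle i := by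
        intro i
        apply Equiv.swap_apply_of_ne_of_ne
        · intro h
          have : (i : ℕ) = (k : ℕ) := congrArg Fin.val h
          omega
        · intro h
          have : (i : ℕ) = j := congrArg Fin.val h
          omega
      have hσk : σ k = k0 := Equiv.swap_apply_left _ _
      rw [hAalt l k, hAalt l k0]
      conv_lhs => rw [← hmapsym σ]
      rw [integral_map (hPσmeas σ).aemeasurable
          ((hHcont l (Fin.castLE jle l) k).aestronglyMeasurable)]
      congr 1
      funext Y
      show fderiv ℝ φ (fun i => Y (σ (Fin.castLE jle i)))
          (Pi.single l (K (Y (σ (Fin.castLE jle l)), Y (σ k))))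
        = fderiv ℝ φ (fun i => Y (Fin.castLE jle i))
          (Pi.single l (K (Y (Fin.castLE jle l), Y k0)))
      rw [hσk]
      have e1 : (fun i => Y (σ (Fin.castLE jle i))) = fun i : Fin j => Y (Fin.castLE jle i) :=
        funext fun i => by rw [hfix i]
      rw [e1, hfix l]
    -- splitting the sum over Fin N
    have hfilter : Finset.univ.filter (fun k : Fin N => (k : ℕ) < j)
        = Finset.map (Fin.castLEEmb jle) Finset.univ := by
      ext k
      simp only [Finset.mem_filter, Finset.mem_univ, true_and, Finset.mem_map,
        Fin.castLEEmb, Function.Embedding.coeFn_mk]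
      constructor
      · intro hk
        exact ⟨⟨(k : ℕ), hk⟩, by apply Fin.ext; rfl⟩
      · rintro ⟨i, rfl⟩
        exact i.2
    have hsplit : ∀ l : Fin j, ∑ k : Fin N, A l k
        = (∑ k : Fin j, A l (Fin.castLE jle k)) + (N - j : ℕ) * A l ⟨j, hjN⟩ := by
      intro l
      rw [← Finset.sum_filter_add_sum_filter_not Finset.univ
        (fun k : Fin N => (k : ℕ) < j) (A l)]
      congr 1
      · rw [hfilter, Finset.sum_map]
        rfl
      · rw [Finset.sum_congr rfl
          (fun k hk => hsym l k (by simpa using (Finset.mem_filter.1 hk).2)),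
          Finset.sum_const, nsmul_eq_mul]
        congr 2
        rw [Finset.filter_not, Finset.card_sdiff_of_subset (Finset.filter_subset _ _), hfilter,
          Finset.card_map, Finset.card_univ, Finset.card_univ]
        simp
    -- identify the marginal integrals
    have hcontj : ∀ (l k : Fin j),
        Continuous (fun w : Fin j → EuclideanSpace ℝ (Fin d) =>
          fderiv ℝ φ w (Pi.single l (K (w l, w k)))) := by
      intro l k
      exact isBoundedBilinearMap_apply.continuous.comp
        (hfdcont.prodMk ((hsinglecont l).comp
          (hK.continuous.comp ((continuous_apply l).prodMk (continuous_apply k)))))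
    have hcontj1 : ∀ (l : Fin j),
        Continuous (fun w : Fin (j+1) → EuclideanSpace ℝ (Fin d) =>
          fderiv ℝ φ (fun i => w (Fin.castSucc i))
            (Pi.single l (K (w (Fin.castSucc l), w (Fin.last j))))) := by
      intro l
      have h1 : Continuous fun w : Fin (j+1) → EuclideanSpace ℝ (Fin d) =>
          K (w (Fin.castSucc l), w (Fin.last j)) :=
        hK.continuous.comp
          ((continuous_apply (Fin.castSucc l)).prodMk (continuous_apply (Fin.last j)))
      have h2 : Continuous fun w : Fin (j+1) → EuclideanSpace ℝ (Fin d) =>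
          (Pi.single l (K (w (Fin.castSucc l), w (Fin.last j))) :
            Fin j → EuclideanSpace ℝ (Fin d)) := (hsinglecont l).comp h1
      have h0 : Continuous fun w : Fin (j+1) → EuclideanSpace ℝ (Fin d) =>
          (fun i : Fin j => w (Fin.castSucc i)) :=
        continuous_pi fun i => continuous_apply (Fin.castSucc i)
      exact isBoundedBilinearMap_apply.continuous.comp ((hfdcont.comp h0).prodMk h2)
    have hM1 : ∀ (k l : Fin j),
        (∫ w, fderiv ℝ φ w (Pi.single l (K (w l, w k)))
          ∂(Measure.map (fun Z (i : Fin j) => Z (Fin.castLE (Nat.le_of_succ_le hjN) i))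
            (Measure.map (T t) F))) = A l (Fin.castLE jle k) := by
      intro k l
      rw [Measure.map_map hprojj_meas (hTmeas t),
        integral_map ((hprojj_meas.comp (hTmeas t)).aemeasurable)
          (hcontj l k).aestronglyMeasurable]
      rfl
    have hM2 : ∀ (l : Fin j),
        (∫ w, fderiv ℝ φ (fun i => w (Fin.castSucc i))
            (Pi.single l (K (w (Fin.castSucc l), w (Fin.last j))))
          ∂(Measure.map (fun Z (i : Fin (j + 1)) => Z (Fin.castLE hjN i))
            (Measure.map (T t) F))) = A l ⟨j, hjN⟩ := by
      intro l
      rw [Measure.map_map hprojj1_meas (hTmeas t),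
        integral_map ((hprojj1_meas.comp (hTmeas t)).aemeasurable)
          (hcontj1 l).aestronglyMeasurable]
      rfl
    simp only [hM1, hM2]
    rw [hint1]
    rw [Finset.sum_congr rfl (fun l _ => hsplit l), Finset.sum_add_distrib]
    rw [Finset.sum_comm (s := (Finset.univ : Finset (Fin j)))]
    have hc : ((N - j : ℕ) : ℝ) = (N : ℝ) - j := by
      rw [Nat.cast_sub jle]
    rw [mul_add]
    congr 1
    rw [← Finset.mul_sum, hc]
    field_simp
  rw [hfun_eq, ← hderiv_eq]
  exact hmain.2
end
end

section
/- (Uniqueness for abstract infinite hierarchies.) Let (E_n)_{n≥1} be a sequence of Banach spaces. For each n ≥ 1, let (U_n(t))_{t∈ℝ} be a strongly continuous one-parameter group of linear isometries of E_n, and let L_{n,n+1} : E_{n+1} → E_n be a bounded linear operator; assume there exists C > 0 such that ‖L_{n,n+1}‖ ≤ C n for every n ≥ 1. Let t* > 0 and, for each n ≥ 1, let u_n ∈ C¹([0,t*], E_n) satisfy u̇_n(t) = U_n(t) L_{n,n+1} U_{n+1}(−t) u_{n+1}(t) for all t ∈ [0,t*] and u_n(0) = 0. If there exists R > 0 such that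 sup_{0≤t≤t*} ‖u_n(t)‖_{E_n} ≤ R^n for all n ≥ 1, then u_n(t) = 0 for all t ∈ [0,t*] and all n ≥ 1. -/
open MeasureTheory Real Filter Topology
open scoped ENNReal NNReal

noncomputable section

lemma choose_le_two_pow_aux (n k : ℕ) : n.choose k ≤ 2 ^ n := by
  rcases le_or_gt k n with h | h
  · calc n.choose k ≤ ∑ m ∈ Finset.range (n + 1), n.choose m :=
          Finset.single_le_sum (fun _ _ => Nat.zero_le _)
            (Finset.mem_range.2 (Nat.lt_succ_of_le h))
      _ = 2 ^ n := Nat.sum_range_choose n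
  · simp [Nat.choose_eq_zero_of_lt h]

/-- uniqueness for abstract infinite hierarchies: let `(E n)` be a
sequence of Banach spaces (here `E n` plays the role of `E_{n+1}`), `U n` a
strongly continuous one-parameter group of linear isometries of `E n`, and
`Lop n : E (n+1) → E n` bounded linear operators with `‖Lop n‖ ≤ C (n+1)`.  If
`u n ∈ C¹([0,t*], E n)` satisfy `u̇ₙ(t) = Uₙ(t) Lₙ U_{n+1}(−t) u_{n+1}(t)`,
`uₙ(0) = 0` and `sup_{[0,t*]} ‖uₙ(t)‖ ≤ R^{n+1}` for some `R > 0`, then `u ≡ 0`. -/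
theorem stmt19
    (E : ℕ → Type*) [∀ n, NormedAddCommGroup (E n)] [∀ n, NormedSpace ℝ (E n)]
    [∀ n, CompleteSpace (E n)]
    (U : (n : ℕ) → ℝ → (E n ≃ₗᵢ[ℝ] E n))
    (hU0 : ∀ n, U n 0 = LinearIsometryEquiv.refl ℝ (E n))
    (hUgroup : ∀ n, ∀ s t : ℝ, ∀ x : E n, U n (s + t) x = U n s (U n t x))
    (hUcont : ∀ n, ∀ x : E n, Continuous fun t => U n t x)
    (Lop : (n : ℕ) → E (n + 1) →L[ℝ] E n)
    (C : ℝ) (hC : 0 < C) (hLop : ∀ n : ℕ, ‖Lop n‖ ≤ C * (n + 1))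
    (tstar : ℝ) (htstar : 0 < tstar)
    (u : (n : ℕ) → ℝ → E n)
    (hu0 : ∀ n, u n 0 = 0)
    (huode : ∀ n : ℕ, ∀ t ∈ Set.Icc (0 : ℝ) tstar,
      HasDerivWithinAt (u n)
        (U n t (Lop n (U (n + 1) (-t) (u (n + 1) t))))
        (Set.Icc (0 : ℝ) tstar) t)
    (R : ℝ) (hR : 0 < R)
    (hbound : ∀ n : ℕ, ∀ t ∈ Set.Icc (0 : ℝ) tstar, ‖u n t‖ ≤ R ^ (n + 1)) :
    ∀ n : ℕ, ∀ t ∈ Set.Icc (0 : ℝ) tstar, u n t = 0 := by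
  -- basic setup
  set r : ℝ := max R 1 with hr_def
  have hr1 : (1 : ℝ) ≤ r := le_max_right _ _
  have hrpos : (0 : ℝ) < r := lt_of_lt_of_le one_pos hr1
  have hRr : R ≤ r := le_max_left _ _
  set δ : ℝ := 1 / (4 * C * r) with hδ_def
  have hδpos : 0 < δ := by positivity
  -- key local uniqueness lemma
  have key : ∀ a b : ℝ, 0 ≤ a → b ≤ tstar → b ≤ a + δ →
      (∀ m, u m a = 0) → ∀ n, ∀ t ∈ Set.Icc a b, u n t = 0 := by
    intro a b ha hb hbδ hua n t ht
    have hab : a ≤ b := le_trans ht.1 ht.2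
    have hsub : Set.Icc a b ⊆ Set.Icc (0 : ℝ) tstar := by
      intro x hx; exact ⟨le_trans ha hx.1, le_trans hx.2 hb⟩
    -- iterated estimate
    have claim : ∀ k : ℕ, ∀ m : ℕ, ∀ s ∈ Set.Icc a b,
        ‖u m s‖ ≤ ((m + k).choose k : ℝ) * C ^ k * (s - a) ^ k * R ^ (m + k + 1) := by
      intro k
      induction k with
      | zero =>
        intro m s hs
        simpa using hbound m s (hsub hs)
      | succ k ih =>
        intro m s hs
        set K : ℝ := ((m + k + 1).choose (k + 1) : ℝ) * C ^ (k + 1) * R ^ (m + k + 2) with hK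
        have hKnonneg : 0 ≤ K := by positivity
        have hcont : ContinuousOn (u m) (Set.Icc a b) := fun x hx =>
          ((huode m x (hsub hx)).continuousWithinAt).mono hsub
        have hf' : ∀ x ∈ Set.Ico a b, HasDerivWithinAt (u m)
            (U m x (Lop m (U (m + 1) (-x) (u (m + 1) x)))) (Set.Ici x) x := by
          intro x hx
          have hx' : x ∈ Set.Icc a b := ⟨hx.1, le_of_lt hx.2⟩
          have h0 := huode m x (hsub hx')
          apply h0.mono_of_mem_nhdsWithin
          have hxlt : x < tstar := lt_of_lt_of_le hx.2 hb
          have : Set.Ico x tstar ∈ nhdsWithin x (Set.Ici x) :=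
            Ico_mem_nhdsGE hxlt
          exact Filter.mem_of_superset this (fun y hy =>
            ⟨le_trans (le_trans ha hx.1) hy.1, le_of_lt hy.2⟩)
        have hB : ∀ x : ℝ, HasDerivAt (fun s => K * (s - a) ^ (k + 1))
            (K * ((k + 1) * (x - a) ^ k)) x := by
          intro x
          have h1 : HasDerivAt (fun s : ℝ => (s - a) ^ (k + 1))
              ((k + 1 : ℕ) * (x - a) ^ k * 1) x :=
            (((hasDerivAt_id x).sub_const a).pow (k + 1)).congr_deriv (by
              simp)
          have := h1.const_mul K
          refine this.congr_deriv ?_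
          push_cast
          ring
        have bound : ∀ x ∈ Set.Ico a b,
            ‖U m x (Lop m (U (m + 1) (-x) (u (m + 1) x)))‖ ≤ K * ((k + 1) * (x - a) ^ k) := by
          intro x hx
          have hx' : x ∈ Set.Icc a b := ⟨hx.1, le_of_lt hx.2⟩
          have h1 : ‖U m x (Lop m (U (m + 1) (-x) (u (m + 1) x)))‖
              = ‖Lop m (U (m + 1) (-x) (u (m + 1) x))‖ := (U m x).norm_map _
          have h2 : ‖Lop m (U (m + 1) (-x) (u (m + 1) x))‖
              ≤ ‖Lop m‖ * ‖u (m + 1) x‖ := by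
            have := (Lop m).le_opNorm (U (m + 1) (-x) (u (m + 1) x))
            rwa [(U (m + 1) (-x)).norm_map] at this
          have h3 : ‖u (m + 1) x‖
              ≤ ((m + 1 + k).choose k : ℝ) * C ^ k * (x - a) ^ k * R ^ (m + 1 + k + 1) :=
            ih (m + 1) x hx'
          have hxa : 0 ≤ x - a := sub_nonneg.2 hx.1
          have hnorm_nonneg : (0 : ℝ) ≤ ‖u (m + 1) x‖ := norm_nonneg _
          have hop : ‖Lop m‖ * ‖u (m + 1) x‖ ≤ (C * (m + 1)) *
              (((m + 1 + k).choose k : ℝ) * C ^ k * (x - a) ^ k * R ^ (m + 1 + k + 1)) := by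
            apply mul_le_mul (hLop m) h3 hnorm_nonneg
            positivity
          rw [h1]
          refine le_trans (le_trans h2 hop) (le_of_eq ?_)
          -- identity: (m+1) * choose (m+k+1) k = (k+1) * choose (m+k+1) (k+1)
          have hidN : (m + 1) * ((m + k + 1).choose k)
              = (k + 1) * ((m + k + 1).choose (k + 1)) := by
            have h := Nat.choose_succ_right_eq (m + k + 1) k
            rw [show m + k + 1 - k = m + 1 by omega] at h
            calc (m + 1) * ((m + k + 1).choose k)
                = ((m + k + 1).choose k) * (m + 1) := Nat.mul_comm _ _
              _ = ((m + k + 1).choose (k + 1)) * (k + 1) := h.symm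
              _ = (k + 1) * ((m + k + 1).choose (k + 1)) := Nat.mul_comm _ _
          have hidR : ((m : ℝ) + 1) * ((m + k + 1).choose k : ℝ)
              = ((k : ℝ) + 1) * ((m + k + 1).choose (k + 1) : ℝ) := by
            exact_mod_cast hidN
          rw [hK, show m + 1 + k = m + k + 1 by omega, show m + k + 1 + 1 = m + k + 2 by omega]
          linear_combination (C ^ (k + 1) * (x - a) ^ k * R ^ (m + k + 2)) * hidR
        have hua' : ‖u m a‖ ≤ K * (a - a) ^ (k + 1) := by
          rw [hua m]; simp
        have := image_norm_le_of_norm_deriv_right_le_deriv_boundary hcont hf' hua' hB bound hs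
        calc ‖u m s‖ ≤ K * (s - a) ^ (k + 1) := this
          _ = ((m + (k + 1)).choose (k + 1) : ℝ) * C ^ (k + 1) * (s - a) ^ (k + 1)
              * R ^ (m + (k + 1) + 1) := by
            rw [hK, show m + k + 1 = m + (k + 1) by omega, show m + k + 2 = m + (k + 1) + 1 by omega]
            ring
    -- take the limit k → ∞
    have hta : 0 ≤ t - a := sub_nonneg.2 ht.1
    have htδ : t - a ≤ δ := by linarith [ht.2]
    have hbnd : ∀ k : ℕ, ‖u n t‖ ≤ (2 ^ n * r ^ (n + 1)) * (1 / 2) ^ k := by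
      intro k
      have h1 := claim k n t ht
      have h2 : ((n + k).choose k : ℝ) ≤ 2 ^ (n + k) := by
        exact_mod_cast choose_le_two_pow_aux (n + k) k
      have h3 : (t - a) ^ k ≤ δ ^ k := pow_le_pow_left₀ hta htδ k
      have h4 : R ^ (n + k + 1) ≤ r ^ (n + k + 1) := pow_le_pow_left₀ hR.le hRr _
      have h5 : ‖u n t‖ ≤ 2 ^ (n + k) * C ^ k * δ ^ k * r ^ (n + k + 1) := by
        calc ‖u n t‖ ≤ ((n + k).choose k : ℝ) * C ^ k * (t - a) ^ k * R ^ (n + k + 1) := h1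
          _ ≤ 2 ^ (n + k) * C ^ k * δ ^ k * r ^ (n + k + 1) := by
            apply mul_le_mul (mul_le_mul (mul_le_mul h2 le_rfl (by positivity) (by positivity))
              h3 (by positivity) (by positivity)) h4 (by positivity) (by positivity)
      refine h5.trans (le_of_eq ?_)
      have hCδ : C * r * δ = 1 / 4 := by
        rw [hδ_def]; field_simp
      have : (2:ℝ) ^ (n + k) * C ^ k * δ ^ k * r ^ (n + k + 1)
          = (2 ^ n * r ^ (n + 1)) * ((2 * C * r * δ) ^ k) := by
        rw [pow_add, pow_add, mul_pow, mul_pow, mul_pow]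
        ring
      rw [this]
      congr 1
      have : 2 * C * r * δ = 1 / 2 := by
        rw [show 2 * C * r * δ = 2 * (C * r * δ) by ring, hCδ]; norm_num
      rw [this]
    have htend : Tendsto (fun k : ℕ => (2 ^ n * r ^ (n + 1)) * (1 / 2 : ℝ) ^ k) atTop (nhds 0) := by
      have := tendsto_pow_atTop_nhds_zero_of_lt_one (by norm_num : (0:ℝ) ≤ 1/2)
        (by norm_num : (1/2 : ℝ) < 1)
      simpa using this.const_mul (2 ^ n * r ^ (n + 1))
    have hle0 : ‖u n t‖ ≤ 0 := ge_of_tendsto' htend hbnd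
    exact norm_le_zero_iff.1 hle0
  -- global statement by induction on the number of steps
  have main : ∀ j : ℕ, ∀ n : ℕ, ∀ t ∈ Set.Icc (0 : ℝ) tstar, t ≤ j * δ → u n t = 0 := by
    intro j
    induction j with
    | zero =>
      intro n t ht htj
      have : t = 0 := le_antisymm (by simpa using htj) ht.1
      rw [this]; exact hu0 n
    | succ j ih =>
      intro n t ht htj
      rcases le_or_gt t (j * δ) with h | h
      · exact ih n t ht h
      · set a : ℝ := j * δ with ha_def
        have ha0 : 0 ≤ a := by positivity
        have hat : a < t := h
        have haI : a ∈ Set.Icc (0 : ℝ) tstar := ⟨ha0, le_trans hat.le ht.2⟩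
        have hua : ∀ m, u m a = 0 := fun m => ih m a haI le_rfl
        have htb : t ≤ a + δ := by
          have : ((j : ℝ) + 1) * δ = a + δ := by rw [ha_def]; ring
          rw [← this]
          exact_mod_cast htj
        exact key a t ha0 ht.2 htb hua n t ⟨hat.le, le_rfl⟩
  intro n t ht
  obtain ⟨j, hj⟩ := exists_nat_ge (tstar / δ)
  have : tstar ≤ j * δ := by
    rw [div_le_iff₀ hδpos] at hj
    linarith
  exact main j n t ht (le_trans ht.2 this)
end
end
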